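/- arXiv:1208.2302 — 4 statements merged into one kernel-verified Lean document; each statement's English description precedes it below -/
import Mathlib

section
/- For any 0 < γ < n−1 with n ≥ 2, any radial integrable function f on ℝ^n, and any x ≠ 0, the convolution satisfies ∫ |x−y|^{−γ} |f(y)| dy ≤ C |x|^{−γ} ‖f‖_{L¹}, where C depends only on n and γ. -/
open MeasureTheory Metric Set ENNReal

variable {n : ℕ}


/-- Rotation invariance: integral of a radial function over a ball depends only on
the norm of the center. -/
lemma lintegral_ball_radial (F : (EuclideanSpace ℝ (Fin n)) → ℝ≥0∞)
    (hrad : ∀ x y : EuclideanSpace ℝ (Fin n), ‖x‖ = ‖y‖ → F x = F y) {a b : EuclideanSpace ℝ (Fin n)} (hab : ‖a‖ = ‖b‖)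
    (s : ℝ) : ∫⁻ y in ball a s, F y = ∫⁻ y in ball b s, F y := by
  set e : (EuclideanSpace ℝ (Fin n)) ≃ₗᵢ[ℝ] (EuclideanSpace ℝ (Fin n)) := Submodule.reflection (ℝ ∙ (b - a))ᗮ with he
  have heb : e b = a := Submodule.reflection_sub hab.symm
  have h1 : ∀ y, F (e y) = F y := fun y => hrad _ _ (e.norm_map y)
  have h2 : e '' ball b s = ball a s := by
    rw [← heb]
    ext z
    constructor
    · rintro ⟨w, hw, rfl⟩
      simpa [mem_ball, dist_eq_norm, ← map_sub, e.norm_map] using hw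
    · intro hz
      refine ⟨e.symm z, ?_, e.apply_symm_apply z⟩
      have hz' : ‖z - e b‖ < s := by simpa [mem_ball, dist_eq_norm] using hz
      rw [mem_ball, dist_eq_norm]
      calc ‖e.symm z - b‖ = ‖e.symm (z - e b)‖ := by
            rw [map_sub, e.symm_apply_apply]
        _ = ‖z - e b‖ := e.symm.norm_map _
        _ < s := hz'
  symm
  calc ∫⁻ y in ball b s, F y = ∫⁻ y in ball b s, F (e y) := by
        simp only [h1]
    _ = ∫⁻ z in e '' ball b s, F z :=
        (e.measurePreserving).setLIntegral_comp_emb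
          e.toHomeomorph.measurableEmbedding F _
    _ = ∫⁻ y in ball a s, F y := by rw [h2]


lemma real_annulus (m : ℕ) {R δ : ℝ} (hδ0 : 0 < δ) (hδ : δ ≤ R / 2) :
    ((m : ℝ) + 1) * (R / 2) ^ m * (2 * δ) ≤ (R + δ) ^ (m + 1) - (R - δ) ^ (m + 1) := by
  have hR : 0 < R := by linarith
  have hb : R / 2 ≤ R - δ := by linarith
  have hb0 : (0:ℝ) ≤ R - δ := by linarith
  have hab : R - δ ≤ R + δ := by linarith
  have hgeom := geom_sum₂_mul (R + δ) (R - δ) (m + 1)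
  have hsum : ((m : ℝ) + 1) * (R / 2) ^ m ≤
      ∑ i ∈ Finset.range (m + 1), (R + δ) ^ i * (R - δ) ^ (m + 1 - 1 - i) := by
    have : ∀ i ∈ Finset.range (m + 1), (R / 2) ^ m ≤ (R + δ) ^ i * (R - δ) ^ (m + 1 - 1 - i) := by
      intro i hi
      simp only [Nat.add_sub_cancel] at *
      have hi' : i ≤ m := Nat.lt_succ_iff.mp (Finset.mem_range.mp hi)
      calc (R / 2) ^ m ≤ (R - δ) ^ m := pow_le_pow_left₀ (by linarith) hb m
        _ = (R - δ) ^ i * (R - δ) ^ (m - i) := by rw [← pow_add, Nat.add_sub_cancel' hi']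
        _ ≤ (R + δ) ^ i * (R - δ) ^ (m - i) := by
            gcongr
    calc ((m : ℝ) + 1) * (R / 2) ^ m
        = ∑ _i ∈ Finset.range (m + 1), (R / 2) ^ m := by
          rw [Finset.sum_const, Finset.card_range]; push_cast; ring
      _ ≤ _ := Finset.sum_le_sum this
  have h2δ : R + δ - (R - δ) = 2 * δ := by ring
  calc ((m : ℝ) + 1) * (R / 2) ^ m * (2 * δ)
      ≤ (∑ i ∈ Finset.range (m + 1), (R + δ) ^ i * (R - δ) ^ (m + 1 - 1 - i)) * (2 * δ) := by
        gcongr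
    _ = (R + δ) ^ (m + 1) - (R - δ) ^ (m + 1) := by rw [← h2δ, hgeom]

lemma real_const (m : ℕ) {R δ : ℝ} (hR : 0 < R) (hδ0 : 0 < δ) :
    (2 * δ) ^ (m + 1) / (((m : ℝ) + 1) * (R / 2) ^ m * (2 * δ)) ≤
      4 ^ (m + 1) / ((m : ℝ) + 1) * (δ / R) ^ m := by
  have hm : (0:ℝ) < (m : ℝ) + 1 := by positivity
  have heq : (2 * δ) ^ (m + 1) / (((m : ℝ) + 1) * (R / 2) ^ m * (2 * δ)) =
      4 ^ m / ((m : ℝ) + 1) * (δ / R) ^ m := by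
    rw [pow_succ]
    field_simp
    ring_nf
    have e : R ^ m * R⁻¹ ^ m = 1 := by rw [← mul_pow, mul_inv_cancel₀ hR.ne', one_pow]
    have e2 : (1/2:ℝ)^m * 4^m = 2^m := by rw [← mul_pow]; norm_num
    linear_combination (-(δ^m) * ((1/2:ℝ)^m * 4^m)) * e + (-(δ^m)) * e2
  rw [heq]
  have h4 : (4:ℝ) ^ m ≤ 4 ^ (m + 1) := by
    apply pow_le_pow_right₀ (by norm_num) (Nat.le_succ m)
  gcongr


lemma two_pow_coeff (m k : ℕ) (γ : ℝ) :
    ((2:ℝ) ^ (k + 1) : ℝ) ^ γ * (((2:ℝ) ^ k)⁻¹) ^ m =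
      (2:ℝ) ^ γ * ((2:ℝ) ^ (γ - (m:ℝ))) ^ k := by
  have h1 : ((2:ℝ) ^ (k + 1) : ℝ) ^ γ = (2:ℝ) ^ (((k:ℝ) + 1) * γ) := by
    rw [← Real.rpow_natCast (2:ℝ) (k + 1), ← Real.rpow_mul (by norm_num)]
    push_cast
    ring_nf
  have h2 : (((2:ℝ) ^ k)⁻¹) ^ m = (2:ℝ) ^ (-((k:ℝ) * (m:ℝ))) := by
    rw [← Real.rpow_natCast (2:ℝ) k, ← Real.rpow_neg (by norm_num),
      ← Real.rpow_natCast ((2:ℝ) ^ (-(k:ℝ))) m, ← Real.rpow_mul (by norm_num)]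
    ring_nf
  have h3 : ((2:ℝ) ^ (γ - (m:ℝ))) ^ k = (2:ℝ) ^ ((γ - (m:ℝ)) * (k:ℝ)) := by
    rw [← Real.rpow_natCast ((2:ℝ) ^ (γ - (m:ℝ))) k, ← Real.rpow_mul (by norm_num)]
  rw [h1, h2, h3, ← Real.rpow_add two_pos, ← Real.rpow_add two_pos]
  congr 1
  ring

lemma coeff_eq (m k : ℕ) {R γ : ℝ} (hR : 0 < R) :
    (R / 2 ^ (k + 1)) ^ (-γ) * (4 ^ (m + 1) / ((m:ℝ) + 1) * ((R / 2 ^ k) / R) ^ m) =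
      R ^ (-γ) *
        ((4 ^ (m + 1) / ((m:ℝ) + 1) * (2:ℝ) ^ γ) * ((2:ℝ) ^ (γ - (m:ℝ))) ^ k) := by
  have hc : (0:ℝ) < 2 ^ (k + 1) := by positivity
  have e1 : (R / 2 ^ (k + 1)) ^ (-γ) = R ^ (-γ) * ((2:ℝ) ^ (k + 1) : ℝ) ^ γ := by
    rw [Real.div_rpow hR.le hc.le, Real.rpow_neg hc.le, div_eq_mul_inv, inv_inv]
  have e2 : (R / 2 ^ k) / R = ((2:ℝ) ^ k)⁻¹ := by
    rw [div_div, mul_comm, ← div_div, div_self hR.ne', one_div]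
  rw [e1, e2]
  have := two_pow_coeff m k γ
  calc R ^ (-γ) * ((2:ℝ) ^ (k + 1) : ℝ) ^ γ *
        (4 ^ (m + 1) / ((m:ℝ) + 1) * (((2:ℝ) ^ k)⁻¹) ^ m)
      = R ^ (-γ) * (4 ^ (m + 1) / ((m:ℝ) + 1)) *
          (((2:ℝ) ^ (k + 1) : ℝ) ^ γ * (((2:ℝ) ^ k)⁻¹) ^ m) := by ring
    _ = R ^ (-γ) * (4 ^ (m + 1) / ((m:ℝ) + 1)) *
          ((2:ℝ) ^ γ * ((2:ℝ) ^ (γ - (m:ℝ))) ^ k) := by rw [this]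
    _ = _ := by ring

lemma mass_ball (m : ℕ) (F : EuclideanSpace ℝ (Fin (m + 1)) → ℝ≥0∞)
    (hF : AEMeasurable F volume)
    (hrad : ∀ x y : EuclideanSpace ℝ (Fin (m + 1)), ‖x‖ = ‖y‖ → F x = F y)
    {x : EuclideanSpace ℝ (Fin (m + 1))} {δ : ℝ}
    (hx : 0 < ‖x‖) (hδ0 : 0 < δ) (hδ : δ ≤ ‖x‖ / 2) :
    ∫⁻ y in ball x δ, F y ≤
      ENNReal.ofReal (4 ^ (m + 1) / ((m : ℝ) + 1) * (δ / ‖x‖) ^ m) * ∫⁻ y, F y := by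
  set R := ‖x‖ with hR
  have hR0 : 0 < R := hx
  set W : Set (EuclideanSpace ℝ (Fin (m + 1))) :=
    ball (0 : EuclideanSpace ℝ (Fin (m + 1))) (R + δ) \ closedBall 0 (R - δ) with hW
  have hWmeas : MeasurableSet W := measurableSet_ball.diff measurableSet_closedBall
  set ω : ℝ≥0∞ := volume (ball (0 : EuclideanSpace ℝ (Fin (m + 1))) 1) with hω
  have hω0 : ω ≠ 0 := (measure_ball_pos volume 0 one_pos).ne'
  have hωt : ω ≠ ⊤ := measure_ball_lt_top.ne
  have hfr : Module.finrank ℝ (EuclideanSpace ℝ (Fin (m + 1))) = m + 1 :=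
    finrank_euclideanSpace_fin
  -- Step 1: for every x'' in the annulus W, the mass of ball x δ is at most
  -- the mass of ball x'' (2δ)
  have h1 : ∀ x'' ∈ W, ∫⁻ y in ball x δ, F y ≤ ∫⁻ y in ball x'' (2 * δ), F y := by
    intro x'' hx''
    obtain ⟨hx1, hx2⟩ := hx''
    rw [mem_ball_zero_iff] at hx1
    rw [mem_closedBall_zero_iff] at hx2
    push_neg at hx2
    set c : ℝ := ‖x''‖ / R with hc
    have hc0 : 0 ≤ c := div_nonneg (norm_nonneg _) hR0.le
    have hnorm : ‖c • x‖ = ‖x''‖ := by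
      rw [norm_smul, Real.norm_of_nonneg hc0, hc, div_mul_cancel₀ _ hR0.ne']
    have hdist : dist x (c • x) < δ := by
      rw [dist_eq_norm]
      have : x - c • x = (1 - c) • x := by
        rw [sub_smul, one_smul]
      rw [this, norm_smul, Real.norm_eq_abs]
      have : |1 - c| * ‖x‖ = |(1 - c) * R| := by
        rw [abs_mul, abs_of_nonneg hR0.le]
      rw [this]
      have h1c : (1 - c) * R = R - ‖x''‖ := by
        rw [hc, sub_mul, one_mul, div_mul_cancel₀ _ hR0.ne']
      rw [h1c, abs_sub_lt_iff]
      constructor <;> linarith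
    have hsub : ball x δ ⊆ ball (c • x) (2 * δ) := by
      intro z hz
      rw [mem_ball] at hz ⊢
      calc dist z (c • x) ≤ dist z x + dist x (c • x) := dist_triangle _ _ _
        _ < δ + δ := by exact add_lt_add hz hdist
        _ = 2 * δ := by ring
    calc ∫⁻ y in ball x δ, F y ≤ ∫⁻ y in ball (c • x) (2 * δ), F y :=
          lintegral_mono_set hsub
      _ = ∫⁻ y in ball x'' (2 * δ), F y := lintegral_ball_radial F hrad hnorm _
  -- Step 2: vol W * mass ≤ double integral
  have h2 : volume W * ∫⁻ y in ball x δ, F y ≤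
      ∫⁻ x'' in W, ∫⁻ y in ball x'' (2 * δ), F y := by
    calc volume W * ∫⁻ y in ball x δ, F y
        = ∫⁻ _ in W, (∫⁻ y in ball x δ, F y) := by rw [setLIntegral_const, mul_comm]
      _ ≤ _ := setLIntegral_mono' hWmeas h1
  -- Step 3: Fubini bound on the double integral
  have h3 : ∫⁻ x'' in W, ∫⁻ y in ball x'' (2 * δ), F y ≤
      (ENNReal.ofReal ((2 * δ) ^ (m + 1)) * ω) * ∫⁻ y, F y := by
    set S : Set (EuclideanSpace ℝ (Fin (m + 1)) × EuclideanSpace ℝ (Fin (m + 1))) :=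
      {p | dist p.2 p.1 < 2 * δ} with hS
    have hSopen : IsOpen S := isOpen_lt (by fun_prop) continuous_const
    set H : EuclideanSpace ℝ (Fin (m + 1)) × EuclideanSpace ℝ (Fin (m + 1)) → ℝ≥0∞ :=
      S.indicator (fun p => F p.2) with hH
    have hHmeas : AEMeasurable H ((volume.restrict W).prod volume) :=
      (hF.comp_snd).indicator hSopen.measurableSet
    have key : ∀ x'' y, (ball x'' (2 * δ)).indicator F y = H (x'', y) := by
      intro x'' y
      show _ = if dist y x'' < 2 * δ then F y else 0
      by_cases h : dist y x'' < 2 * δ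
      · rw [Set.indicator_of_mem (mem_ball.mpr h), if_pos h]
      · rw [Set.indicator_of_notMem (fun hc => h (mem_ball.mp hc)), if_neg h]
    calc ∫⁻ x'' in W, ∫⁻ y in ball x'' (2 * δ), F y
        = ∫⁻ x'' in W, ∫⁻ y, H (x'', y) := by
          refine lintegral_congr fun x'' => ?_
          rw [← lintegral_indicator measurableSet_ball]
          exact lintegral_congr fun y => key x'' y
      _ = ∫⁻ y, ∫⁻ x'' in W, H (x'', y) := lintegral_lintegral_swap hHmeas
      _ ≤ ∫⁻ y, F y * (ENNReal.ofReal ((2 * δ) ^ (m + 1)) * ω) := by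
          apply lintegral_mono
          intro y
          have : ∀ x'', H (x'', y) = (ball y (2 * δ)).indicator (fun _ => F y) x'' := by
            intro x''
            show (if dist y x'' < 2 * δ then F y else 0) = _
            by_cases h : dist y x'' < 2 * δ
            · rw [if_pos h, Set.indicator_of_mem (mem_ball.mpr (by rwa [dist_comm]))]
            · rw [if_neg h,
                Set.indicator_of_notMem (fun hc => h (by rw [dist_comm]; exact mem_ball.mp hc))]
          calc ∫⁻ x'' in W, H (x'', y)
              = ∫⁻ x'' in W, (ball y (2 * δ)).indicator (fun _ => F y) x'' :=
                lintegral_congr fun x'' => this x''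
            _ = ∫⁻ x'' in ball y (2 * δ), F y ∂(volume.restrict W) := by
                rw [lintegral_indicator measurableSet_ball]
            _ = F y * (volume.restrict W) (ball y (2 * δ)) := setLIntegral_const _ _
            _ ≤ F y * volume (ball y (2 * δ)) := by
                gcongr
                exact Measure.restrict_le_self
            _ = F y * (ENNReal.ofReal ((2 * δ) ^ (m + 1)) * ω) := by
                rw [Measure.addHaar_ball volume y (by positivity), hfr]
      _ = (ENNReal.ofReal ((2 * δ) ^ (m + 1)) * ω) * ∫⁻ y, F y := by
          simp_rw [mul_comm (F _) _]
          exact lintegral_const_mul' _ _ (by finiteness)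
  -- Step 4: volume of the annulus
  have h4 : ENNReal.ofReal (((m : ℝ) + 1) * (R / 2) ^ m * (2 * δ)) * ω ≤ volume W := by
    have hvol : volume W =
        ENNReal.ofReal ((R + δ) ^ (m + 1) - (R - δ) ^ (m + 1)) * ω := by
      rw [hW, measure_diff (closedBall_subset_ball (by linarith))
        measurableSet_closedBall.nullMeasurableSet measure_closedBall_lt_top.ne,
        Measure.addHaar_ball volume 0 (by linarith), Measure.addHaar_closedBall volume 0 (by linarith),
        hfr, ← ENNReal.sub_mul (fun _ _ => hωt), ENNReal.ofReal_sub _ (pow_nonneg (by linarith) _)]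
    rw [hvol]
    gcongr
    exact real_annulus m hδ0 hδ
  -- Step 5: combine
  have hkey : (ENNReal.ofReal (((m : ℝ) + 1) * (R / 2) ^ m * (2 * δ)) * ω) *
      ∫⁻ y in ball x δ, F y ≤ (ENNReal.ofReal ((2 * δ) ^ (m + 1)) * ω) * ∫⁻ y, F y :=
    le_trans (mul_le_mul_left h4 _) (le_trans h2 h3)
  set P : ℝ := ((m : ℝ) + 1) * (R / 2) ^ m * (2 * δ) with hPdef
  have hP : 0 < P := by positivity
  have hPne : ENNReal.ofReal P ≠ 0 := (ENNReal.ofReal_pos.mpr hP).ne'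
  have step : ENNReal.ofReal P * ∫⁻ y in ball x δ, F y ≤
      ENNReal.ofReal ((2 * δ) ^ (m + 1)) * ∫⁻ y, F y := by
    rw [← ENNReal.mul_le_mul_iff_left hω0 hωt]
    calc ENNReal.ofReal P * (∫⁻ y in ball x δ, F y) * ω
        = (ENNReal.ofReal P * ω) * ∫⁻ y in ball x δ, F y := by ring
      _ ≤ (ENNReal.ofReal ((2 * δ) ^ (m + 1)) * ω) * ∫⁻ y, F y := hkey
      _ = ENNReal.ofReal ((2 * δ) ^ (m + 1)) * (∫⁻ y, F y) * ω := by ring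
  have hdiv : ∫⁻ y in ball x δ, F y ≤
      ENNReal.ofReal ((2 * δ) ^ (m + 1) / P) * ∫⁻ y, F y := by
    have hstep : ∫⁻ y in ball x δ, F y ≤
        (ENNReal.ofReal ((2 * δ) ^ (m + 1)) * ∫⁻ y, F y) / ENNReal.ofReal P :=
      (ENNReal.le_div_iff_mul_le (Or.inl hPne) (Or.inl ENNReal.ofReal_ne_top)).mpr
        (by rw [mul_comm]; exact step)
    calc ∫⁻ y in ball x δ, F y
        ≤ (ENNReal.ofReal ((2 * δ) ^ (m + 1)) * ∫⁻ y, F y) / ENNReal.ofReal P := hstep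
      _ = ENNReal.ofReal ((2 * δ) ^ (m + 1) / P) * ∫⁻ y, F y := by
          rw [ENNReal.ofReal_div_of_pos hP, div_eq_mul_inv, div_eq_mul_inv, mul_right_comm]
  calc ∫⁻ y in ball x δ, F y ≤ ENNReal.ofReal ((2 * δ) ^ (m + 1) / P) * ∫⁻ y, F y := hdiv
    _ ≤ ENNReal.ofReal (4 ^ (m + 1) / ((m : ℝ) + 1) * (δ / R) ^ m) * ∫⁻ y, F y := by
        gcongr
        rw [hPdef]
        exact real_const m hR0 hδ0

/-- Weighted convolution estimate for radial integrable functions: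
for `0 < γ < n-1`, `n ≥ 2`, there is `C > 0` (depending only on `n, γ`) such that
for every radial `f ∈ L¹(ℝⁿ)` and every `x ≠ 0`,
`∫ |x-y|^{-γ} |f(y)| dy ≤ C |x|^{-γ} ‖f‖_{L¹}`. -/
theorem weighted_convolution_radial (n : ℕ) (hn : 2 ≤ n) (γ : ℝ) (hγ : 0 < γ)
    (hγn : γ < (n : ℝ) - 1) :
    ∃ C > 0, ∀ f : EuclideanSpace ℝ (Fin n) → ℝ,
      Integrable f →
      (∀ x y : EuclideanSpace ℝ (Fin n), ‖x‖ = ‖y‖ → f x = f y) →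
      ∀ x : EuclideanSpace ℝ (Fin n), x ≠ 0 →
        (∫ y, ‖x - y‖ ^ (-γ) * |f y|) ≤ C * ‖x‖ ^ (-γ) * ∫ y, |f y| := by
  obtain ⟨m, rfl⟩ : ∃ m, n = m + 1 := ⟨n - 1, by omega⟩
  have hγm : γ < (m : ℝ) := by push_cast at hγn; linarith
  set ρ : ℝ := (2:ℝ) ^ (γ - (m:ℝ)) with hρdef
  have hρ0 : 0 < ρ := Real.rpow_pos_of_pos two_pos _
  have hρ1 : ρ < 1 := Real.rpow_lt_one_of_one_lt_of_neg one_lt_two (by linarith)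
  set B : ℝ := 4 ^ (m + 1) / ((m:ℝ) + 1) * (2:ℝ) ^ γ with hBdef
  have hB0 : 0 < B := by
    have : (0:ℝ) < (2:ℝ) ^ γ := Real.rpow_pos_of_pos two_pos _
    positivity
  set C : ℝ := (2:ℝ) ^ γ + B * (1 - ρ)⁻¹ with hCdef
  have h2γ : (0:ℝ) < (2:ℝ) ^ γ := Real.rpow_pos_of_pos two_pos _
  have hC : 0 < C := by
    have h1ρ : (0:ℝ) < (1 - ρ)⁻¹ := by
      rw [inv_pos]; linarith
    positivity
  refine ⟨C, hC, ?_⟩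
  intro f hf hfrad x hx
  set R : ℝ := ‖x‖ with hRdef
  have hR0 : 0 < R := norm_pos_iff.mpr hx
  set F : EuclideanSpace ℝ (Fin (m + 1)) → ℝ≥0∞ := fun y => ENNReal.ofReal |f y|
    with hFdef
  have hF : AEMeasurable F volume :=
    (ENNReal.measurable_ofReal.comp continuous_abs.measurable).comp_aemeasurable
      hf.1.aemeasurable
  have hFrad : ∀ a b : EuclideanSpace ℝ (Fin (m + 1)), ‖a‖ = ‖b‖ → F a = F b :=
    fun a b h => by rw [hFdef]; simp only; rw [hfrad a b h]
  set L : ℝ≥0∞ := ∫⁻ y, F y with hLdef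
  have hFnn : ∀ y, F y = (‖f y‖₊ : ℝ≥0∞) := fun y => (Real.enorm_eq_ofReal_abs _).symm
  have hL : L ≠ ⊤ := by
    rw [hLdef]
    simp_rw [hFnn]
    exact hf.2.ne
  set g : EuclideanSpace ℝ (Fin (m + 1)) → ℝ≥0∞ :=
    fun y => ENNReal.ofReal (‖x - y‖ ^ (-γ)) * F y with hgdef
  -- the main lintegral estimate
  have hmain : ∫⁻ y, g y ≤ ENNReal.ofReal C * ENNReal.ofReal (R ^ (-γ)) * L := by
    have hsplit : ∫⁻ y, g y =
        (∫⁻ y in ball x (R / 2), g y) + ∫⁻ y in (ball x (R / 2))ᶜ, g y :=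
      (lintegral_add_compl g measurableSet_ball).symm
    -- Part A : far region
    have hA : ∫⁻ y in (ball x (R / 2))ᶜ, g y ≤
        ENNReal.ofReal ((2:ℝ) ^ γ * R ^ (-γ)) * L := by
      have hfar : ∀ y ∈ (ball x (R / 2))ᶜ,
          g y ≤ ENNReal.ofReal ((R / 2) ^ (-γ)) * F y := by
        intro y hy
        have hyx : R / 2 ≤ ‖x - y‖ := by
          rw [mem_compl_iff, mem_ball, dist_eq_norm, not_lt, norm_sub_rev] at hy
          exact hy
        exact mul_le_mul_left
          (ENNReal.ofReal_le_ofReal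
            (Real.rpow_le_rpow_of_nonpos (by positivity) hyx (neg_nonpos.mpr hγ.le))) _
      calc ∫⁻ y in (ball x (R / 2))ᶜ, g y
          ≤ ∫⁻ y in (ball x (R / 2))ᶜ, ENNReal.ofReal ((R / 2) ^ (-γ)) * F y :=
            setLIntegral_mono' measurableSet_ball.compl hfar
        _ = ENNReal.ofReal ((R / 2) ^ (-γ)) * ∫⁻ y in (ball x (R / 2))ᶜ, F y :=
            lintegral_const_mul' _ _ ENNReal.ofReal_ne_top
        _ ≤ ENNReal.ofReal ((R / 2) ^ (-γ)) * L := by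
            gcongr
            exact setLIntegral_le_lintegral _ _
        _ = ENNReal.ofReal ((2:ℝ) ^ γ * R ^ (-γ)) * L := by
            congr 2
            rw [Real.div_rpow hR0.le (by norm_num), Real.rpow_neg (by norm_num : (0:ℝ) ≤ 2),
              div_eq_mul_inv, inv_inv, mul_comm]
    -- Part B : near region, dyadic decomposition
    set S : ℕ → Set (EuclideanSpace ℝ (Fin (m + 1))) :=
      fun k => {y | R / 2 ^ (k + 1) ≤ ‖x - y‖ ∧ ‖x - y‖ < R / 2 ^ k} with hSdef
    have hcont : Continuous fun y : EuclideanSpace ℝ (Fin (m + 1)) => ‖x - y‖ :=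
      (continuous_const.sub continuous_id).norm
    have hmeasS : ∀ k, MeasurableSet (S k) := fun k =>
      (measurableSet_le measurable_const hcont.measurable).inter
        (measurableSet_lt hcont.measurable measurable_const)
    have hcover : ball x (R / 2) ⊆ {x} ∪ ⋃ j : ℕ, S (j + 1) := by
      intro y hy
      by_cases hxy : y = x
      · left; simp [hxy]
      right
      have ht0 : 0 < ‖x - y‖ := by
        rw [norm_pos_iff, sub_ne_zero]
        exact fun h => hxy h.symm
      have ht : ‖x - y‖ < R / 2 := by
        rw [mem_ball, dist_eq_norm, norm_sub_rev] at hy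
        exact hy
      have hex : ∃ j, R / 2 ^ (j + 1) ≤ ‖x - y‖ := by
        obtain ⟨j, hj⟩ := exists_pow_lt_of_lt_one
          (div_pos ht0 hR0) (show (1:ℝ) / 2 < 1 by norm_num)
        refine ⟨j, ?_⟩
        have h1 : R * ((1:ℝ) / 2) ^ j < ‖x - y‖ := by
          calc R * ((1:ℝ) / 2) ^ j < R * (‖x - y‖ / R) := by
                exact mul_lt_mul_of_pos_left hj hR0
            _ = ‖x - y‖ := by field_simp
        have h2 : R / 2 ^ (j + 1) ≤ R / 2 ^ j := by
          gcongr
          · norm_num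
          · omega
        have h3 : R / 2 ^ j = R * ((1:ℝ) / 2) ^ j := by
          rw [div_pow, one_pow, mul_one_div]
        linarith
      set k := Nat.find hex with hkdef
      have hk1 : R / 2 ^ (k + 1) ≤ ‖x - y‖ := Nat.find_spec hex
      have hk0 : k ≠ 0 := by
        intro h
        rw [h] at hk1
        norm_num at hk1
        linarith
      obtain ⟨j, hjk⟩ : ∃ j, k = j + 1 := ⟨k - 1, by omega⟩
      have hk2 : ‖x - y‖ < R / 2 ^ k := by
        have hmin := Nat.find_min hex (show k - 1 < k by omega)
        rw [not_le] at hmin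
        have : k - 1 + 1 = k := by omega
        rwa [this] at hmin
      exact mem_iUnion.mpr ⟨j, ⟨by rwa [← hjk], by rwa [← hjk]⟩⟩
    -- term bound
    have hterm : ∀ j : ℕ, ∫⁻ y in S (j + 1), g y ≤
        ENNReal.ofReal (R ^ (-γ)) * ENNReal.ofReal (B * ρ ^ (j + 1)) * L := by
      intro j
      set k := j + 1 with hk
      have hδk0 : (0:ℝ) < R / 2 ^ k := by positivity
      have hδk : R / 2 ^ k ≤ R / 2 := by
        have h2k : (2:ℝ) ≤ 2 ^ k := by
          calc (2:ℝ) = 2 ^ 1 := (pow_one 2).symm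
            _ ≤ 2 ^ k := pow_le_pow_right₀ one_le_two (by omega)
        gcongr
      have hsub : S k ⊆ ball x (R / 2 ^ k) := by
        intro y hy
        rw [mem_ball, dist_eq_norm, norm_sub_rev]
        exact hy.2
      calc ∫⁻ y in S k, g y
          ≤ ∫⁻ y in S k, ENNReal.ofReal ((R / 2 ^ (k + 1)) ^ (-γ)) * F y := by
            refine setLIntegral_mono' (hmeasS k) fun y hy => ?_
            exact mul_le_mul_left
              (ENNReal.ofReal_le_ofReal
                (Real.rpow_le_rpow_of_nonpos (by positivity) hy.1
                  (neg_nonpos.mpr hγ.le))) _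
        _ = ENNReal.ofReal ((R / 2 ^ (k + 1)) ^ (-γ)) * ∫⁻ y in S k, F y :=
            lintegral_const_mul' _ _ ENNReal.ofReal_ne_top
        _ ≤ ENNReal.ofReal ((R / 2 ^ (k + 1)) ^ (-γ)) *
              (ENNReal.ofReal (4 ^ (m + 1) / ((m:ℝ) + 1) * ((R / 2 ^ k) / R) ^ m) * L) := by
            gcongr
            calc ∫⁻ y in S k, F y ≤ ∫⁻ y in ball x (R / 2 ^ k), F y :=
                  lintegral_mono_set hsub
              _ ≤ _ := mass_ball m F hF hFrad hR0 hδk0 hδk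
        _ = ENNReal.ofReal (R ^ (-γ)) * ENNReal.ofReal (B * ρ ^ (j + 1)) * L := by
            rw [← mul_assoc, ← ENNReal.ofReal_mul (by positivity), coeff_eq m k hR0,
              ENNReal.ofReal_mul (by positivity), hk]
    -- geometric sum
    have hgeo : (∑' j : ℕ, ENNReal.ofReal (B * ρ ^ (j + 1))) ≤
        ENNReal.ofReal (B * (1 - ρ)⁻¹) := by
      have h1 : ∀ j : ℕ, ENNReal.ofReal (B * ρ ^ (j + 1)) =
          ENNReal.ofReal B * (ENNReal.ofReal ρ) ^ (j + 1) := fun j => by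
        rw [ENNReal.ofReal_mul hB0.le, ENNReal.ofReal_pow hρ0.le]
      calc ∑' j : ℕ, ENNReal.ofReal (B * ρ ^ (j + 1))
          = ENNReal.ofReal B * ∑' j : ℕ, (ENNReal.ofReal ρ) ^ (j + 1) := by
            simp_rw [h1]; rw [ENNReal.tsum_mul_left]
        _ ≤ ENNReal.ofReal B * ∑' j : ℕ, (ENNReal.ofReal ρ) ^ j :=
            mul_le_mul_right (ENNReal.tsum_le_tsum fun j =>
              pow_le_pow_of_le_one zero_le
                (ENNReal.ofReal_le_one.mpr hρ1.le) (Nat.le_succ j)) _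
        _ = ENNReal.ofReal B * (1 - ENNReal.ofReal ρ)⁻¹ := by
            rw [ENNReal.tsum_geometric]
        _ = ENNReal.ofReal (B * (1 - ρ)⁻¹) := by
            rw [ENNReal.ofReal_mul hB0.le]
            congr 1
            rw [← ENNReal.ofReal_one, ← ENNReal.ofReal_sub _ hρ0.le,
              ENNReal.ofReal_inv_of_pos (by linarith)]
    -- Part B total
    have hB' : ∫⁻ y in ball x (R / 2), g y ≤
        ENNReal.ofReal (R ^ (-γ)) * ENNReal.ofReal (B * (1 - ρ)⁻¹) * L := by
      calc ∫⁻ y in ball x (R / 2), g y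
          ≤ ∫⁻ y in {x} ∪ ⋃ j : ℕ, S (j + 1), g y := lintegral_mono_set hcover
        _ ≤ (∫⁻ y in {x}, g y) + ∫⁻ y in ⋃ j : ℕ, S (j + 1), g y :=
            lintegral_union_le _ _ _
        _ ≤ 0 + ∑' j : ℕ, ∫⁻ y in S (j + 1), g y := by
            gcongr
            · rw [lintegral_singleton]
              simp [measure_singleton]
            · exact lintegral_iUnion_le _ _
        _ = ∑' j : ℕ, ∫⁻ y in S (j + 1), g y := by rw [zero_add]
        _ ≤ ∑' j : ℕ, ENNReal.ofReal (R ^ (-γ)) * ENNReal.ofReal (B * ρ ^ (j + 1)) * L :=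
            ENNReal.tsum_le_tsum hterm
        _ = ENNReal.ofReal (R ^ (-γ)) * (∑' j : ℕ, ENNReal.ofReal (B * ρ ^ (j + 1))) * L := by
            rw [ENNReal.tsum_mul_right, ENNReal.tsum_mul_left]
        _ ≤ _ := by gcongr
    rw [hsplit]
    calc (∫⁻ y in ball x (R / 2), g y) + ∫⁻ y in (ball x (R / 2))ᶜ, g y
        ≤ ENNReal.ofReal (R ^ (-γ)) * ENNReal.ofReal (B * (1 - ρ)⁻¹) * L +
            ENNReal.ofReal ((2:ℝ) ^ γ * R ^ (-γ)) * L := add_le_add hB' hA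
      _ = ENNReal.ofReal C * ENNReal.ofReal (R ^ (-γ)) * L := by
          rw [← add_mul]
          congr 1
          rw [← ENNReal.ofReal_mul (Real.rpow_nonneg hR0.le _),
            ← ENNReal.ofReal_add (mul_nonneg (Real.rpow_nonneg hR0.le _)
              (mul_nonneg hB0.le (inv_nonneg.mpr (by linarith)))) (mul_nonneg h2γ.le (Real.rpow_nonneg hR0.le _)),
            ← ENNReal.ofReal_mul hC.le]
          congr 1
          rw [hCdef]
          ring
  -- convert the lintegral estimate to the Bochner integral statement
  have hRHS : ∫ y, |f y| = L.toReal := by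
    rw [integral_eq_lintegral_of_nonneg_ae (Filter.Eventually.of_forall fun y => abs_nonneg _)
      hf.abs.aestronglyMeasurable]
  by_cases hg : Integrable (fun y => ‖x - y‖ ^ (-γ) * |f y|)
  · rw [integral_eq_lintegral_of_nonneg_ae
      (Filter.Eventually.of_forall fun y => by positivity) hg.aestronglyMeasurable, hRHS]
    have heq : ∀ y, ENNReal.ofReal (‖x - y‖ ^ (-γ) * |f y|) = g y := fun y =>
      ENNReal.ofReal_mul (by positivity)
    have hle : ∫⁻ y, ENNReal.ofReal (‖x - y‖ ^ (-γ) * |f y|) ≤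
        ENNReal.ofReal C * ENNReal.ofReal (R ^ (-γ)) * L := by
      simp_rw [heq]; exact hmain
    calc (∫⁻ y, ENNReal.ofReal (‖x - y‖ ^ (-γ) * |f y|)).toReal
        ≤ (ENNReal.ofReal C * ENNReal.ofReal (R ^ (-γ)) * L).toReal :=
          ENNReal.toReal_mono
            (ENNReal.mul_ne_top
              (ENNReal.mul_ne_top ENNReal.ofReal_ne_top ENNReal.ofReal_ne_top) hL) hle
      _ = C * R ^ (-γ) * L.toReal := by
          rw [ENNReal.toReal_mul, ENNReal.toReal_mul, ENNReal.toReal_ofReal hC.le,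
            ENNReal.toReal_ofReal (Real.rpow_nonneg hR0.le _)]
  · rw [integral_undef hg]
    have h0 : 0 ≤ ∫ y, |f y| := integral_nonneg fun y => abs_nonneg _
    have : (0:ℝ) ≤ R ^ (-γ) := Real.rpow_nonneg hR0.le _
    apply mul_nonneg (mul_nonneg hC.le this) h0
end

section
/- (Stein–Weiss inequality, L² case) Let n ≥ 1, 0 < λ < n, 0 < β < n/2, and λ + β = n. Then for all f ∈ L²(ℝ^n), ‖ |x|^{−β} (|·|^{−λ} * f) ‖_{L²} ≤ C ‖f‖_{L²}, with C depending only on n, λ, β. -/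
open MeasureTheory

section SteinWeissAux

open Metric Set Module
open scoped ENNReal

set_option linter.unusedSectionVars false

variable {E : Type*} [NormedAddCommGroup E] [NormedSpace ℝ E] [MeasurableSpace E]
  [BorelSpace E] [FiniteDimensional ℝ E] [Nontrivial E]
  (μ : Measure E) [μ.IsAddHaarMeasure]

theorem SW.lem_ball {s : ℝ} (hs0 : 0 ≤ s) (hsd : s < finrank ℝ E) :
    ∫⁻ y in ball (0:E) 1, ENNReal.ofReal (‖y‖ ^ (-s)) ∂μ < ∞ := by
  set d := finrank ℝ E with hd
  set S : ℕ → Set E := fun k => {y | (1/2:ℝ)^(k+1) ≤ ‖y‖ ∧ ‖y‖ < (1/2:ℝ)^k} with hS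
  have hSmeas : ∀ k, MeasurableSet (S k) := fun k => by
    apply MeasurableSet.inter
    · exact measurableSet_le measurable_const measurable_norm
    · exact measurableSet_lt measurable_norm measurable_const
  have hsub : ball (0:E) 1 \ {0} ⊆ ⋃ k, S k := by
    intro y hy
    have hy0 : 0 < ‖y‖ := by
      simpa [norm_pos_iff] using hy.2
    have hy1 : ‖y‖ < 1 := by simpa using hy.1
    have hex : ∃ m, (1/2:ℝ)^(m+1) ≤ ‖y‖ := by
      obtain ⟨m, hm⟩ := exists_pow_lt_of_lt_one hy0 (by norm_num : (1/2:ℝ) < 1)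
      exact ⟨m, by
        calc (1/2:ℝ)^(m+1) ≤ (1/2:ℝ)^m := by
              apply pow_le_pow_of_le_one (by norm_num) (by norm_num) (by omega)
          _ ≤ ‖y‖ := hm.le⟩
    set k := Nat.find hex with hk
    refine mem_iUnion.2 ⟨k, Nat.find_spec hex, ?_⟩
    rcases Nat.eq_zero_or_pos k with h0 | hpos
    · rw [h0]; simpa using hy1
    · have := Nat.find_min hex (m := k - 1) (by omega)
      push_neg at this
      calc ‖y‖ < (1/2:ℝ)^(k-1+1) := this
        _ = (1/2:ℝ)^k := by congr 1; omega
  have h0 : μ ({(0:E)} : Set E) = 0 := measure_singleton _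
  have hcongr : (∫⁻ y in ball (0:E) 1, ENNReal.ofReal (‖y‖ ^ (-s)) ∂μ)
      = ∫⁻ y in ball (0:E) 1 \ {0}, ENNReal.ofReal (‖y‖ ^ (-s)) ∂μ := by
    refine (setLIntegral_congr ?_).symm
    exact (diff_ae_eq_self (μ := μ)).2 (measure_mono_null inter_subset_right h0)
  rw [hcongr]
  have hpow : ∀ (m : ℕ), ((1/2:ℝ))^m = (2:ℝ)^(-(m:ℝ)) := by
    intro m
    rw [Real.rpow_neg (by norm_num), Real.rpow_natCast, one_div, inv_pow]
  have hbound : ∀ k, (∫⁻ y in S k, ENNReal.ofReal (‖y‖ ^ (-s)) ∂μ)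
      ≤ ENNReal.ofReal ((2:ℝ)^s) * ENNReal.ofReal ((2:ℝ)^(s - d))^k * μ (ball (0:E) 1) := by
    intro k
    have hstep : ∀ y ∈ S k, ENNReal.ofReal (‖y‖ ^ (-s))
        ≤ ENNReal.ofReal (((1/2:ℝ)^(k+1)) ^ (-s)) := by
      intro y hy
      exact ENNReal.ofReal_le_ofReal
        (Real.rpow_le_rpow_of_nonpos (by positivity) hy.1 (by linarith))
    calc (∫⁻ y in S k, ENNReal.ofReal (‖y‖ ^ (-s)) ∂μ)
        ≤ ∫⁻ _ in S k, ENNReal.ofReal (((1/2:ℝ)^(k+1)) ^ (-s)) ∂μ :=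
          setLIntegral_mono' (hSmeas k) hstep
      _ = ENNReal.ofReal (((1/2:ℝ)^(k+1)) ^ (-s)) * μ (S k) := setLIntegral_const _ _
      _ ≤ ENNReal.ofReal (((1/2:ℝ)^(k+1)) ^ (-s)) * μ (ball (0:E) ((1/2:ℝ)^k)) := by
          gcongr
          intro y hy
          simpa [mem_ball_zero_iff] using hy.2
      _ = ENNReal.ofReal (((1/2:ℝ)^(k+1)) ^ (-s)) * (ENNReal.ofReal (((1/2:ℝ)^k)^d) * μ (ball (0:E) 1)) := by
          rw [Measure.addHaar_ball μ _ (by positivity)]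
      _ = ENNReal.ofReal (((1/2:ℝ)^(k+1)) ^ (-s) * ((1/2:ℝ)^k)^d) * μ (ball (0:E) 1) := by
          rw [← mul_assoc, ← ENNReal.ofReal_mul (by positivity)]
      _ ≤ ENNReal.ofReal ((2:ℝ)^s) * ENNReal.ofReal ((2:ℝ)^(s - d))^k * μ (ball (0:E) 1) := by
          gcongr ?_ * _
          rw [← ENNReal.ofReal_pow (by positivity), ← ENNReal.ofReal_mul (by positivity)]
          apply ENNReal.ofReal_le_ofReal
          apply le_of_eq
          rw [hpow (k+1), hpow k, ← Real.rpow_natCast ((2:ℝ)^(-(k:ℝ))) d,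
            ← Real.rpow_natCast ((2:ℝ)^(s - (d:ℝ))) k,
            ← Real.rpow_mul (by norm_num : (0:ℝ) ≤ 2),
            ← Real.rpow_mul (by norm_num : (0:ℝ) ≤ 2),
            ← Real.rpow_mul (by norm_num : (0:ℝ) ≤ 2),
            ← Real.rpow_add (by norm_num : (0:ℝ) < 2),
            ← Real.rpow_add (by norm_num : (0:ℝ) < 2)]
          congr 1
          push_cast
          ring
  calc (∫⁻ y in ball (0:E) 1 \ {0}, ENNReal.ofReal (‖y‖ ^ (-s)) ∂μ)
      ≤ ∫⁻ y in ⋃ k, S k, ENNReal.ofReal (‖y‖ ^ (-s)) ∂μ := lintegral_mono_set hsub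
    _ ≤ ∑' k, ∫⁻ y in S k, ENNReal.ofReal (‖y‖ ^ (-s)) ∂μ := lintegral_iUnion_le _ _
    _ ≤ ∑' k, ENNReal.ofReal ((2:ℝ)^s) * ENNReal.ofReal ((2:ℝ)^(s - d))^k * μ (ball (0:E) 1) :=
        ENNReal.tsum_le_tsum hbound
    _ = ENNReal.ofReal ((2:ℝ)^s) * μ (ball (0:E) 1) * ∑' k, ENNReal.ofReal ((2:ℝ)^(s - d))^k := by
        rw [← ENNReal.tsum_mul_left]
        congr 1 with k
        ring
    _ < ∞ := by
        have hr1 : ENNReal.ofReal ((2:ℝ)^(s - d)) < 1 := by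
          rw [← ENNReal.ofReal_one]
          exact ENNReal.ofReal_lt_ofReal_iff_of_nonneg (by positivity) |>.2
            (Real.rpow_lt_one_of_one_lt_of_neg (by norm_num) (by linarith))
        rw [ENNReal.tsum_geometric]
        refine ENNReal.mul_lt_top (ENNReal.mul_lt_top ENNReal.ofReal_lt_top measure_ball_lt_top) ?_
        exact ENNReal.inv_lt_top.2 (tsub_pos_iff_lt.2 hr1)

theorem SW.lem_compl {t R : ℝ} (hR : 0 < R) (htd : (finrank ℝ E : ℝ) < t) :
    ∫⁻ y in (ball (0:E) R)ᶜ, ENNReal.ofReal (‖y‖ ^ (-t)) ∂μ < ∞ := by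
  have ht0 : 0 < t := lt_of_le_of_lt (by positivity) htd
  have hstep : ∀ y ∈ (ball (0:E) R)ᶜ, ENNReal.ofReal (‖y‖ ^ (-t))
      ≤ ENNReal.ofReal ((1 + R⁻¹)^t) * ENNReal.ofReal ((1 + ‖y‖) ^ (-t)) := by
    intro y hy
    have hyR : R ≤ ‖y‖ := by simpa [mem_ball_zero_iff, not_lt] using hy
    have hy0 : 0 < ‖y‖ := lt_of_lt_of_le hR hyR
    rw [← ENNReal.ofReal_mul (by positivity)]
    apply ENNReal.ofReal_le_ofReal
    have h2 : (1:ℝ) ≤ R⁻¹ * ‖y‖ := by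
      rw [← inv_mul_cancel₀ hR.ne']
      gcongr
    have h1 : (1 + R⁻¹)⁻¹ * (1 + ‖y‖) ≤ ‖y‖ := by
      rw [inv_mul_le_iff₀ (by positivity)]
      nlinarith
    calc ‖y‖ ^ (-t) ≤ ((1 + R⁻¹)⁻¹ * (1 + ‖y‖)) ^ (-t) :=
          Real.rpow_le_rpow_of_nonpos (by positivity) h1 (by linarith)
      _ = (1 + R⁻¹)^t * (1 + ‖y‖) ^ (-t) := by
          rw [Real.mul_rpow (by positivity) (by positivity),
            Real.inv_rpow (by positivity), Real.rpow_neg (by positivity), inv_inv]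
  calc (∫⁻ y in (ball (0:E) R)ᶜ, ENNReal.ofReal (‖y‖ ^ (-t)) ∂μ)
      ≤ ∫⁻ y in (ball (0:E) R)ᶜ,
          ENNReal.ofReal ((1 + R⁻¹)^t) * ENNReal.ofReal ((1 + ‖y‖) ^ (-t)) ∂μ :=
        setLIntegral_mono' measurableSet_ball.compl hstep
    _ ≤ ∫⁻ y, ENNReal.ofReal ((1 + R⁻¹)^t) * ENNReal.ofReal ((1 + ‖y‖) ^ (-t)) ∂μ :=
        setLIntegral_le_lintegral _ _
    _ = ENNReal.ofReal ((1 + R⁻¹)^t) * ∫⁻ y, ENNReal.ofReal ((1 + ‖y‖) ^ (-t)) ∂μ := by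
        rw [lintegral_const_mul'] ; exact ENNReal.ofReal_ne_top
    _ < ∞ := ENNReal.mul_lt_top ENNReal.ofReal_lt_top (finite_integral_one_add_norm htd)

theorem SW.lintegral_scale {f : E → ℝ≥0∞} (hf : Measurable f) {R : ℝ} (hR : 0 < R) :
    ∫⁻ x, f x ∂μ = ENNReal.ofReal (R ^ finrank ℝ E) * ∫⁻ y, f (R • y) ∂μ := by
  have hmap : (∫⁻ y, f (R • y) ∂μ)
      = ENNReal.ofReal |(R ^ finrank ℝ E)⁻¹| * ∫⁻ x, f x ∂μ := by
    rw [← lintegral_map hf (measurable_const_smul R), Measure.map_addHaar_smul μ hR.ne',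
      lintegral_smul_measure, smul_eq_mul]
  rw [hmap, ← mul_assoc, ← ENNReal.ofReal_mul (by positivity), abs_of_pos (by positivity),
    mul_inv_cancel₀ (by positivity), ENNReal.ofReal_one, one_mul]

theorem SW.measurePreserving_sub_left' (x : E) :
    MeasurePreserving (fun y : E => x - y) μ μ := by
  have hneg : MeasurePreserving (fun y : E => -y) μ μ := by
    refine ⟨measurable_neg, ?_⟩
    have : (fun y : E => -y) = fun y : E => (-1 : ℝ) • y := by
      funext y; simp
    rw [this, Measure.map_addHaar_smul μ (by norm_num : (-1:ℝ) ≠ 0)]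
    simp [abs_inv, abs_pow]
  have hadd : MeasurePreserving (fun y : E => x + y) μ μ :=
    measurePreserving_add_left μ x
  have := hadd.comp hneg
  simpa [Function.comp_def, sub_eq_add_neg] using this

theorem SW.key_unit {a b : ℝ} (ha0 : 0 < a) (had : a < finrank ℝ E) (hb0 : 0 < b)
    (hbd : b < finrank ℝ E) (hab : (finrank ℝ E : ℝ) < a + b) :
    ∃ M : ℝ≥0∞, M ≠ ⊤ ∧ ∀ x : E, ‖x‖ = 1 →
      (∫⁻ y, ENNReal.ofReal (‖y‖ ^ (-a)) * ENNReal.ofReal (‖x - y‖ ^ (-b)) ∂μ) ≤ M := by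
  set I₁ := ∫⁻ y in ball (0:E) 1, ENNReal.ofReal (‖y‖ ^ (-a)) ∂μ with hI₁
  set I₂ := ∫⁻ u in ball (0:E) 2, ENNReal.ofReal (‖u‖ ^ (-b)) ∂μ with hI₂
  set I₃ := ∫⁻ y in (ball (0:E) (1/2))ᶜ, ENNReal.ofReal (‖y‖ ^ (-(a+b))) ∂μ with hI₃
  have hI₁fin : I₁ < ∞ := SW.lem_ball μ ha0.le had
  have hI₂fin : I₂ < ∞ := by
    have hsplit : (ball (0:E) 2) = ball (0:E) 1 ∪ (ball (0:E) 2 \ ball (0:E) 1) := by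
      rw [union_diff_cancel (ball_subset_ball (by norm_num))]
    calc I₂ = ∫⁻ u in ball (0:E) 1 ∪ (ball (0:E) 2 \ ball (0:E) 1),
            ENNReal.ofReal (‖u‖ ^ (-b)) ∂μ := by rw [hI₂, ← hsplit]
      _ ≤ (∫⁻ u in ball (0:E) 1, ENNReal.ofReal (‖u‖ ^ (-b)) ∂μ)
          + ∫⁻ u in ball (0:E) 2 \ ball (0:E) 1, ENNReal.ofReal (‖u‖ ^ (-b)) ∂μ :=
        lintegral_union_le _ _ _
      _ ≤ (∫⁻ u in ball (0:E) 1, ENNReal.ofReal (‖u‖ ^ (-b)) ∂μ)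
          + ∫⁻ _ in ball (0:E) 2 \ ball (0:E) 1, (1 : ℝ≥0∞) ∂μ := by
        refine add_le_add_right (setLIntegral_mono' (measurableSet_ball.diff measurableSet_ball) ?_) _
        intro u hu
        have hu1 : 1 ≤ ‖u‖ := by
          simpa [mem_ball_zero_iff, not_lt] using hu.2
        calc ENNReal.ofReal (‖u‖ ^ (-b)) ≤ ENNReal.ofReal ((1:ℝ) ^ (-b)) :=
              ENNReal.ofReal_le_ofReal
                (Real.rpow_le_rpow_of_nonpos one_pos hu1 (by linarith))
          _ = 1 := by simp
      _ < ∞ := by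
        refine ENNReal.add_lt_top.2 ⟨SW.lem_ball μ hb0.le hbd, ?_⟩
        rw [setLIntegral_const, one_mul]
        exact lt_of_le_of_lt (measure_mono diff_subset) measure_ball_lt_top
  have hI₃fin : I₃ < ∞ := SW.lem_compl μ (by norm_num) hab
  refine ⟨ENNReal.ofReal ((2:ℝ)^b) * I₁ + (ENNReal.ofReal ((2:ℝ)^a) * I₂
      + ENNReal.ofReal ((3/2:ℝ)^b) * I₃), ?_, ?_⟩
  · exact (ENNReal.add_lt_top.2 ⟨ENNReal.mul_lt_top ENNReal.ofReal_lt_top hI₁fin,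
      ENNReal.add_lt_top.2 ⟨ENNReal.mul_lt_top ENNReal.ofReal_lt_top hI₂fin,
        ENNReal.mul_lt_top ENNReal.ofReal_lt_top hI₃fin⟩⟩).ne
  intro x hx
  set A := ball (0:E) (1/2) with hA
  set B := ball x 2 with hB
  have hJsplit : (∫⁻ y, ENNReal.ofReal (‖y‖ ^ (-a)) * ENNReal.ofReal (‖x - y‖ ^ (-b)) ∂μ)
      = (∫⁻ y in A, ENNReal.ofReal (‖y‖ ^ (-a)) * ENNReal.ofReal (‖x - y‖ ^ (-b)) ∂μ)
        + ∫⁻ y in Aᶜ, ENNReal.ofReal (‖y‖ ^ (-a)) * ENNReal.ofReal (‖x - y‖ ^ (-b)) ∂μ :=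
    (lintegral_add_compl _ measurableSet_ball).symm
  have hhalf : ((1:ℝ)/2) ^ (-b) = (2:ℝ)^b := by
    rw [one_div, Real.inv_rpow (by norm_num), ← Real.rpow_neg (by norm_num), neg_neg]
  have hhalfa : ((1:ℝ)/2) ^ (-a) = (2:ℝ)^a := by
    rw [one_div, Real.inv_rpow (by norm_num), ← Real.rpow_neg (by norm_num), neg_neg]
  have hPartA : (∫⁻ y in A, ENNReal.ofReal (‖y‖ ^ (-a)) * ENNReal.ofReal (‖x - y‖ ^ (-b)) ∂μ)
      ≤ ENNReal.ofReal ((2:ℝ)^b) * I₁ := by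
    have hpt : ∀ y ∈ A, ENNReal.ofReal (‖y‖ ^ (-a)) * ENNReal.ofReal (‖x - y‖ ^ (-b))
        ≤ ENNReal.ofReal ((2:ℝ)^b) * ENNReal.ofReal (‖y‖ ^ (-a)) := by
      intro y hy
      have hy2 : ‖y‖ < 1/2 := by simpa [hA, mem_ball_zero_iff] using hy
      have hxy : (1:ℝ)/2 ≤ ‖x - y‖ := by
        have h := norm_sub_norm_le x y
        rw [hx] at h
        linarith
      have : ‖x - y‖ ^ (-b) ≤ (2:ℝ)^b := by
        rw [← hhalf]
        exact Real.rpow_le_rpow_of_nonpos (by norm_num) hxy (by linarith)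
      calc ENNReal.ofReal (‖y‖ ^ (-a)) * ENNReal.ofReal (‖x - y‖ ^ (-b))
          ≤ ENNReal.ofReal (‖y‖ ^ (-a)) * ENNReal.ofReal ((2:ℝ)^b) := by
            gcongr
        _ = ENNReal.ofReal ((2:ℝ)^b) * ENNReal.ofReal (‖y‖ ^ (-a)) := mul_comm _ _
    calc (∫⁻ y in A, ENNReal.ofReal (‖y‖ ^ (-a)) * ENNReal.ofReal (‖x - y‖ ^ (-b)) ∂μ)
        ≤ ∫⁻ y in A, ENNReal.ofReal ((2:ℝ)^b) * ENNReal.ofReal (‖y‖ ^ (-a)) ∂μ :=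
          setLIntegral_mono' measurableSet_ball hpt
      _ = ENNReal.ofReal ((2:ℝ)^b) * ∫⁻ y in A, ENNReal.ofReal (‖y‖ ^ (-a)) ∂μ :=
          lintegral_const_mul' _ _ ENNReal.ofReal_ne_top
      _ ≤ ENNReal.ofReal ((2:ℝ)^b) * I₁ := by
          gcongr
          exact lintegral_mono_set (ball_subset_ball (by norm_num))
  have hPartB : (∫⁻ y in Aᶜ ∩ B, ENNReal.ofReal (‖y‖ ^ (-a)) * ENNReal.ofReal (‖x - y‖ ^ (-b)) ∂μ)
      ≤ ENNReal.ofReal ((2:ℝ)^a) * I₂ := by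
    have hpt : ∀ y ∈ Aᶜ ∩ B, ENNReal.ofReal (‖y‖ ^ (-a)) * ENNReal.ofReal (‖x - y‖ ^ (-b))
        ≤ ENNReal.ofReal ((2:ℝ)^a) * ENNReal.ofReal (‖x - y‖ ^ (-b)) := by
      intro y hy
      have hy2 : (1:ℝ)/2 ≤ ‖y‖ := by
        have := hy.1
        simpa [hA, mem_ball_zero_iff, not_lt] using this
      refine mul_le_mul_left ?_ _
      rw [← hhalfa]
      exact ENNReal.ofReal_le_ofReal
        (Real.rpow_le_rpow_of_nonpos (by norm_num) hy2 (by linarith))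
    have htrans : (∫⁻ y in B, ENNReal.ofReal (‖x - y‖ ^ (-b)) ∂μ) = I₂ := by
      set h : E → ℝ≥0∞ := (ball (0:E) 2).indicator (fun u => ENNReal.ofReal (‖u‖ ^ (-b)))
        with hh
      have hhm : Measurable h := by
        apply Measurable.indicator ?_ measurableSet_ball
        fun_prop
      have h1 : (∫⁻ y in B, ENNReal.ofReal (‖x - y‖ ^ (-b)) ∂μ) = ∫⁻ y, h (x - y) ∂μ := by
        rw [← lintegral_indicator measurableSet_ball]
        refine lintegral_congr fun y => ?_
        by_cases hyB : y ∈ B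
        · have : x - y ∈ ball (0:E) 2 := by
            rw [mem_ball_zero_iff, norm_sub_rev]
            simpa [hB, mem_ball, dist_eq_norm] using hyB
          rw [indicator_of_mem hyB, hh, indicator_of_mem this]
        · have : x - y ∉ ball (0:E) 2 := by
            rw [mem_ball_zero_iff, norm_sub_rev]
            simpa [hB, mem_ball, dist_eq_norm] using hyB
          rw [indicator_of_notMem hyB, hh, indicator_of_notMem this]
      rw [h1, (SW.measurePreserving_sub_left' μ x).lintegral_comp hhm, hh,
        lintegral_indicator measurableSet_ball]
    calc (∫⁻ y in Aᶜ ∩ B, ENNReal.ofReal (‖y‖ ^ (-a)) * ENNReal.ofReal (‖x - y‖ ^ (-b)) ∂μ)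
        ≤ ∫⁻ y in Aᶜ ∩ B, ENNReal.ofReal ((2:ℝ)^a) * ENNReal.ofReal (‖x - y‖ ^ (-b)) ∂μ :=
          setLIntegral_mono' (measurableSet_ball.compl.inter measurableSet_ball) hpt
      _ = ENNReal.ofReal ((2:ℝ)^a) * ∫⁻ y in Aᶜ ∩ B, ENNReal.ofReal (‖x - y‖ ^ (-b)) ∂μ :=
          lintegral_const_mul' _ _ ENNReal.ofReal_ne_top
      _ ≤ ENNReal.ofReal ((2:ℝ)^a) * ∫⁻ y in B, ENNReal.ofReal (‖x - y‖ ^ (-b)) ∂μ := by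
          gcongr
          exact inter_subset_right
      _ = ENNReal.ofReal ((2:ℝ)^a) * I₂ := by rw [htrans]
  have hPartC : (∫⁻ y in Aᶜ \ B, ENNReal.ofReal (‖y‖ ^ (-a)) * ENNReal.ofReal (‖x - y‖ ^ (-b)) ∂μ)
      ≤ ENNReal.ofReal ((3/2:ℝ)^b) * I₃ := by
    have hpt : ∀ y ∈ Aᶜ \ B, ENNReal.ofReal (‖y‖ ^ (-a)) * ENNReal.ofReal (‖x - y‖ ^ (-b))
        ≤ ENNReal.ofReal ((3/2:ℝ)^b) * ENNReal.ofReal (‖y‖ ^ (-(a+b))) := by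
      intro y hy
      have hy2 : (1:ℝ)/2 ≤ ‖y‖ := by
        have := hy.1
        simpa [hA, mem_ball_zero_iff, not_lt] using this
      have hy0 : (0:ℝ) < ‖y‖ := by linarith
      have hxy2 : (2:ℝ) ≤ ‖x - y‖ := by
        have := hy.2
        rw [hB, mem_ball, dist_eq_norm] at this
        push_neg at this
        calc (2:ℝ) ≤ ‖y - x‖ := this
          _ = ‖x - y‖ := (norm_sub_rev _ _).symm
      have h1 : ‖y‖ ≤ (3/2) * ‖x - y‖ := by
        have h2 : ‖y‖ - ‖x‖ ≤ ‖y - x‖ := norm_sub_norm_le y x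
        rw [norm_sub_rev] at h2
        rw [hx] at h2
        linarith
      have h3 : ‖x - y‖ ^ (-b) ≤ (3/2:ℝ)^b * ‖y‖ ^ (-b) := by
        have h4 : (2/3:ℝ) * ‖y‖ ≤ ‖x - y‖ := by linarith
        have h5 : ‖x - y‖ ^ (-b) ≤ ((2/3:ℝ) * ‖y‖) ^ (-b) :=
          Real.rpow_le_rpow_of_nonpos (by positivity) h4 (by linarith)
        have h6 : ((2/3:ℝ) * ‖y‖) ^ (-b) = (3/2:ℝ)^b * ‖y‖ ^ (-b) := by
          rw [Real.mul_rpow (by norm_num) hy0.le]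
          congr 1
          rw [show (2/3:ℝ) = (3/2:ℝ)⁻¹ by norm_num, Real.inv_rpow (by norm_num),
            ← Real.rpow_neg (by norm_num), neg_neg]
        exact h6 ▸ h5
      calc ENNReal.ofReal (‖y‖ ^ (-a)) * ENNReal.ofReal (‖x - y‖ ^ (-b))
          ≤ ENNReal.ofReal (‖y‖ ^ (-a)) * ENNReal.ofReal ((3/2:ℝ)^b * ‖y‖ ^ (-b)) := by
            gcongr ?_ * ?_
            · exact le_rfl
            · exact ENNReal.ofReal_le_ofReal h3
        _ = ENNReal.ofReal ((3/2:ℝ)^b) * ENNReal.ofReal (‖y‖ ^ (-a) * ‖y‖ ^ (-b)) := by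
            rw [← ENNReal.ofReal_mul (by positivity), ← ENNReal.ofReal_mul (by positivity)]
            congr 1
            ring
        _ = ENNReal.ofReal ((3/2:ℝ)^b) * ENNReal.ofReal (‖y‖ ^ (-(a+b))) := by
            rw [← Real.rpow_add hy0, neg_add]
    calc (∫⁻ y in Aᶜ \ B, ENNReal.ofReal (‖y‖ ^ (-a)) * ENNReal.ofReal (‖x - y‖ ^ (-b)) ∂μ)
        ≤ ∫⁻ y in Aᶜ \ B, ENNReal.ofReal ((3/2:ℝ)^b) * ENNReal.ofReal (‖y‖ ^ (-(a+b))) ∂μ :=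
          setLIntegral_mono' ((measurableSet_ball.compl).diff measurableSet_ball) hpt
      _ = ENNReal.ofReal ((3/2:ℝ)^b) * ∫⁻ y in Aᶜ \ B, ENNReal.ofReal (‖y‖ ^ (-(a+b))) ∂μ :=
          lintegral_const_mul' _ _ ENNReal.ofReal_ne_top
      _ ≤ ENNReal.ofReal ((3/2:ℝ)^b) * I₃ := by
          gcongr
          exact lintegral_mono_set diff_subset
  calc (∫⁻ y, ENNReal.ofReal (‖y‖ ^ (-a)) * ENNReal.ofReal (‖x - y‖ ^ (-b)) ∂μ)
      = (∫⁻ y in A, ENNReal.ofReal (‖y‖ ^ (-a)) * ENNReal.ofReal (‖x - y‖ ^ (-b)) ∂μ)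
        + ∫⁻ y in Aᶜ, ENNReal.ofReal (‖y‖ ^ (-a)) * ENNReal.ofReal (‖x - y‖ ^ (-b)) ∂μ := hJsplit
    _ ≤ (∫⁻ y in A, ENNReal.ofReal (‖y‖ ^ (-a)) * ENNReal.ofReal (‖x - y‖ ^ (-b)) ∂μ)
        + ((∫⁻ y in Aᶜ ∩ B, ENNReal.ofReal (‖y‖ ^ (-a)) * ENNReal.ofReal (‖x - y‖ ^ (-b)) ∂μ)
          + ∫⁻ y in Aᶜ \ B, ENNReal.ofReal (‖y‖ ^ (-a)) * ENNReal.ofReal (‖x - y‖ ^ (-b)) ∂μ) := by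
        gcongr
        calc (∫⁻ y in Aᶜ, ENNReal.ofReal (‖y‖ ^ (-a)) * ENNReal.ofReal (‖x - y‖ ^ (-b)) ∂μ)
            = ∫⁻ y in (Aᶜ ∩ B) ∪ (Aᶜ \ B),
                ENNReal.ofReal (‖y‖ ^ (-a)) * ENNReal.ofReal (‖x - y‖ ^ (-b)) ∂μ := by
              rw [inter_union_diff]
          _ ≤ _ := lintegral_union_le _ _ _
    _ ≤ ENNReal.ofReal ((2:ℝ)^b) * I₁ + (ENNReal.ofReal ((2:ℝ)^a) * I₂
        + ENNReal.ofReal ((3/2:ℝ)^b) * I₃) := by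
        exact add_le_add hPartA (add_le_add hPartB hPartC)

theorem SW.key {a b : ℝ} (ha0 : 0 < a) (had : a < finrank ℝ E) (hb0 : 0 < b)
    (hbd : b < finrank ℝ E) (hab : (finrank ℝ E : ℝ) < a + b) :
    ∃ C : ℝ, 0 < C ∧ ∀ x : E, x ≠ 0 →
      (∫⁻ y, ENNReal.ofReal (‖y‖ ^ (-a)) * ENNReal.ofReal (‖x - y‖ ^ (-b)) ∂μ)
        ≤ ENNReal.ofReal (C * ‖x‖ ^ ((finrank ℝ E : ℝ) - a - b)) := by
  obtain ⟨M, hMfin, hM⟩ := SW.key_unit μ ha0 had hb0 hbd hab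
  refine ⟨M.toReal + 1, by positivity, ?_⟩
  intro x hx
  set r : ℝ := ‖x‖ with hr
  have hr0 : 0 < r := norm_pos_iff.2 hx
  set xh : E := r⁻¹ • x with hxh
  have hxh1 : ‖xh‖ = 1 := by
    rw [hxh, norm_smul, norm_inv, Real.norm_eq_abs, abs_of_pos hr0, ← hr,
      inv_mul_cancel₀ hr0.ne']
  have hxeq : x = r • xh := by rw [hxh, smul_inv_smul₀ hr0.ne']
  have hmeas : Measurable fun y : E =>
      ENNReal.ofReal (‖y‖ ^ (-a)) * ENNReal.ofReal (‖x - y‖ ^ (-b)) := by fun_prop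
  have hscale := SW.lintegral_scale μ hmeas hr0
  have hptw : ∀ z : E, ENNReal.ofReal (‖r • z‖ ^ (-a)) * ENNReal.ofReal (‖x - r • z‖ ^ (-b))
      = ENNReal.ofReal (r ^ (-a) * r ^ (-b))
        * (ENNReal.ofReal (‖z‖ ^ (-a)) * ENNReal.ofReal (‖xh - z‖ ^ (-b))) := by
    intro z
    have h1 : ‖r • z‖ = r * ‖z‖ := by
      rw [norm_smul, Real.norm_eq_abs, abs_of_pos hr0]
    have h2 : ‖x - r • z‖ = r * ‖xh - z‖ := by
      rw [hxeq, ← smul_sub, norm_smul, Real.norm_eq_abs, abs_of_pos hr0]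
    rw [h1, h2, Real.mul_rpow hr0.le (norm_nonneg _), Real.mul_rpow hr0.le (norm_nonneg _),
      ENNReal.ofReal_mul (by positivity), ENNReal.ofReal_mul (by positivity),
      ENNReal.ofReal_mul (by positivity)]
    ring
  have hJ : (∫⁻ y, ENNReal.ofReal (‖y‖ ^ (-a)) * ENNReal.ofReal (‖x - y‖ ^ (-b)) ∂μ)
      = ENNReal.ofReal (r ^ ((finrank ℝ E : ℝ) - a - b))
        * ∫⁻ z, ENNReal.ofReal (‖z‖ ^ (-a)) * ENNReal.ofReal (‖xh - z‖ ^ (-b)) ∂μ := by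
    rw [hscale]
    simp_rw [hptw]
    rw [lintegral_const_mul' _ _ ENNReal.ofReal_ne_top, ← mul_assoc,
      ← ENNReal.ofReal_mul (by positivity)]
    congr 2
    rw [← Real.rpow_natCast r (finrank ℝ E), ← Real.rpow_add hr0, ← Real.rpow_add hr0]
    congr 1
    ring
  rw [hJ, mul_comm (M.toReal + 1) _, ENNReal.ofReal_mul (by positivity)]
  refine mul_le_mul_right ?_ _
  calc (∫⁻ z, ENNReal.ofReal (‖z‖ ^ (-a)) * ENNReal.ofReal (‖xh - z‖ ^ (-b)) ∂μ)
      ≤ M := hM xh hxh1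
    _ = ENNReal.ofReal M.toReal := (ENNReal.ofReal_toReal hMfin).symm
    _ ≤ ENNReal.ofReal (M.toReal + 1) := ENNReal.ofReal_le_ofReal (by linarith)


end SteinWeissAux

open Metric Set Module in
open scoped ENNReal in
/-- Stein–Weiss inequality, `L²` case: for `0 < λ < n`, `0 < β < n/2`, `λ + β = n`,
`‖ |x|^{-β} (|·|^{-λ} * f) ‖_{L²} ≤ C ‖f‖_{L²}`. -/
theorem stein_weiss_L2 (n : ℕ) (hn : 1 ≤ n) (lam β : ℝ)
    (hlam0 : 0 < lam) (hlamn : lam < n) (hβ0 : 0 < β) (hβn : β < (n : ℝ) / 2)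
    (hsum : lam + β = n) :
    ∃ C > 0, ∀ f : EuclideanSpace ℝ (Fin n) → ℝ, MemLp f 2 →
      eLpNorm (fun x : EuclideanSpace ℝ (Fin n) =>
          ‖x‖ ^ (-β) * ∫ y, ‖x - y‖ ^ (-lam) * f y) 2 volume
        ≤ ENNReal.ofReal C * eLpNorm f 2 volume := by
  have hn0 : (0:ℝ) < n := by exact_mod_cast Nat.pos_of_ne_zero (by omega)
  haveI : Nonempty (Fin n) := ⟨⟨0, by omega⟩⟩
  haveI : Nontrivial (EuclideanSpace ℝ (Fin n)) := inferInstance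
  have hdim : ((finrank ℝ (EuclideanSpace ℝ (Fin n))) : ℝ) = (n:ℝ) := by
    rw [finrank_euclideanSpace_fin]
  obtain ⟨C1, hC1, hK1⟩ := SW.key (μ := (volume : Measure (EuclideanSpace ℝ (Fin n))))
    (a := (n:ℝ)/2) (b := lam)
    (by positivity) (by rw [hdim]; linarith) hlam0 (by rw [hdim]; exact hlamn)
    (by rw [hdim]; linarith)
  obtain ⟨C2, hC2, hK2⟩ := SW.key (μ := (volume : Measure (EuclideanSpace ℝ (Fin n))))
    (a := β + (n:ℝ)/2) (b := lam)
    (by positivity) (by rw [hdim]; linarith) hlam0 (by rw [hdim]; exact hlamn)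
    (by rw [hdim]; linarith)
  rw [hdim] at hK1 hK2
  refine ⟨Real.sqrt (C1*C2), Real.sqrt_pos.2 (by positivity), ?_⟩
  intro f hf
  obtain ⟨g, hgsm, hfg⟩ : ∃ g : EuclideanSpace ℝ (Fin n) → ℝ,
      StronglyMeasurable g ∧ f =ᵐ[volume] g :=
    ⟨hf.1.mk f, hf.1.stronglyMeasurable_mk, hf.1.ae_eq_mk⟩
  have hgm : Measurable g := hgsm.measurable
  set G : EuclideanSpace ℝ (Fin n) → ℝ≥0∞ := fun y => (‖g y‖₊ : ℝ≥0∞) with hG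
  have hGm : Measurable G := hgm.enorm
  set k : EuclideanSpace ℝ (Fin n) → EuclideanSpace ℝ (Fin n) → ℝ≥0∞ :=
    fun x y => ENNReal.ofReal (‖x - y‖ ^ (-lam)) with hk
  set w : EuclideanSpace ℝ (Fin n) → ℝ≥0∞ :=
    fun y => ENNReal.ofReal (‖y‖ ^ (-((n:ℝ)/2))) with hw
  set T : EuclideanSpace ℝ (Fin n) → ℝ≥0∞ := fun x => ∫⁻ y, k x y * G y with hT
  set U : EuclideanSpace ℝ (Fin n) → ℝ≥0∞ :=
    fun x => ∫⁻ y, k x y * (w y)⁻¹ * (G y)^(2:ℝ) with hU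
  have hae0 : ∀ᵐ (x : EuclideanSpace ℝ (Fin n)) ∂volume, x ≠ 0 := by
    have h1 : {x : EuclideanSpace ℝ (Fin n) | ¬ x ≠ 0} = {0} := by ext z; simp
    rw [ae_iff, h1]; exact measure_singleton 0
  have hwm : Measurable w := by fun_prop
  have hsq : ∀ z : ℝ≥0∞, z ^ (2:ℝ) = z * z := fun z => by
    rw [show (2:ℝ) = ((2:ℕ):ℝ) by norm_num, ENNReal.rpow_natCast, sq]
  -- Step A
  have hA : ∀ x : EuclideanSpace ℝ (Fin n),
      ((‖(‖x‖ ^ (-β) * ∫ y, ‖x - y‖ ^ (-lam) * f y : ℝ)‖₊ : ℝ≥0∞))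
        ≤ ENNReal.ofReal (‖x‖ ^ (-β)) * T x := by
    intro x
    rw [nnnorm_mul, ENNReal.coe_mul, ← enorm_eq_nnnorm, Real.enorm_eq_ofReal (by positivity)]
    refine mul_le_mul_right ?_ _
    calc ((‖∫ y, ‖x - y‖ ^ (-lam) * f y‖₊ : ℝ≥0∞))
        ≤ ∫⁻ y, (‖‖x - y‖ ^ (-lam) * f y‖₊ : ℝ≥0∞) ∂volume :=
          enorm_integral_le_lintegral_enorm _
      _ = ∫⁻ y, k x y * (‖f y‖₊ : ℝ≥0∞) ∂volume := by
          refine lintegral_congr fun y => ?_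
          rw [nnnorm_mul, ENNReal.coe_mul, ← enorm_eq_nnnorm, Real.enorm_eq_ofReal (by positivity)]
      _ = T x := by
          refine lintegral_congr_ae (hfg.mono fun y hy => ?_)
          simp only [hy]
          rfl
  -- Step B : Cauchy-Schwarz
  have hCS : ∀ x, T x ≤ (∫⁻ y, w y * k x y ∂volume) ^ (1/2:ℝ) * (U x) ^ (1/2:ℝ) := by
    intro x
    have hφ : AEMeasurable (fun y => (w y * k x y) ^ (1/2:ℝ)) volume := by
      apply Measurable.aemeasurable; fun_prop
    have hψ : AEMeasurable (fun y => (k x y * (w y)⁻¹ * (G y)^(2:ℝ)) ^ (1/2:ℝ)) volume := by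
      apply Measurable.aemeasurable; fun_prop
    have hTeq : T x = ∫⁻ y, ((fun y => (w y * k x y) ^ (1/2:ℝ))
        * (fun y => (k x y * (w y)⁻¹ * (G y)^(2:ℝ)) ^ (1/2:ℝ))) y ∂volume := by
      refine lintegral_congr_ae (hae0.mono fun y hy => ?_)
      have hy0 : (0:ℝ) < ‖y‖ := norm_pos_iff.2 hy
      have hw0 : w y ≠ 0 := by
        rw [hw]
        simp only [ne_eq, ENNReal.ofReal_eq_zero, not_le]
        positivity
      have hwt : w y ≠ ⊤ := ENNReal.ofReal_ne_top
      show k x y * G y = _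
      rw [Pi.mul_apply, ← ENNReal.mul_rpow_of_nonneg _ _ (by norm_num : (0:ℝ) ≤ 1/2),
        show w y * k x y * (k x y * (w y)⁻¹ * (G y)^(2:ℝ))
          = (k x y * G y) * (k x y * G y) * (w y * (w y)⁻¹) from by rw [hsq (G y)]; ring,
        ENNReal.mul_inv_cancel hw0 hwt, mul_one, ← hsq, ← ENNReal.rpow_mul]
      norm_num
    rw [hTeq]
    refine le_trans (ENNReal.lintegral_mul_le_Lp_mul_Lq volume (p := 2) (q := 2)
      ⟨by norm_num, by norm_num, by norm_num⟩ hφ hψ) (le_of_eq ?_)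
    congr 1
    · congr 1
      refine lintegral_congr fun y => ?_
      rw [← ENNReal.rpow_mul]
      norm_num
    · congr 1
      refine lintegral_congr fun y => ?_
      rw [← ENNReal.rpow_mul]
      norm_num
  -- Step B2 : squared pointwise bound
  have hB : ∀ᵐ x ∂(volume : Measure (EuclideanSpace ℝ (Fin n))),
      (ENNReal.ofReal (‖x‖ ^ (-β)) * T x) ^ (2:ℝ)
        ≤ ENNReal.ofReal C1 * (ENNReal.ofReal (‖x‖ ^ (-(β + (n:ℝ)/2))) * U x) := by
    filter_upwards [hae0] with x hx
    have hr0 : (0:ℝ) < ‖x‖ := norm_pos_iff.2 hx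
    have h1 : (∫⁻ y, w y * k x y ∂volume)
        ≤ ENNReal.ofReal (C1 * ‖x‖ ^ ((n:ℝ) - (n:ℝ)/2 - lam)) := hK1 x hx
    have hxexp : (‖x‖^(-β))^(2:ℝ) * ‖x‖^((n:ℝ) - (n:ℝ)/2 - lam) = ‖x‖^(-(β + (n:ℝ)/2)) := by
      rw [← Real.rpow_mul (norm_nonneg x), ← Real.rpow_add hr0]
      congr 1
      linarith
    calc (ENNReal.ofReal (‖x‖ ^ (-β)) * T x) ^ (2:ℝ)
        ≤ (ENNReal.ofReal (‖x‖ ^ (-β))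
            * ((∫⁻ y, w y * k x y ∂volume) ^ (1/2:ℝ) * (U x) ^ (1/2:ℝ))) ^ (2:ℝ) := by
          gcongr
          exact hCS x
      _ = ENNReal.ofReal (‖x‖ ^ (-β)) ^ (2:ℝ) * ((∫⁻ y, w y * k x y ∂volume) * U x) := by
          rw [ENNReal.mul_rpow_of_nonneg _ _ (by norm_num : (0:ℝ) ≤ 2),
            ENNReal.mul_rpow_of_nonneg _ _ (by norm_num : (0:ℝ) ≤ 2),
            ← ENNReal.rpow_mul, ← ENNReal.rpow_mul]
          norm_num
      _ ≤ ENNReal.ofReal (‖x‖ ^ (-β)) ^ (2:ℝ)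
          * (ENNReal.ofReal (C1 * ‖x‖ ^ ((n:ℝ) - (n:ℝ)/2 - lam)) * U x) := by
          gcongr
      _ = ENNReal.ofReal C1 * (ENNReal.ofReal (‖x‖ ^ (-(β + (n:ℝ)/2))) * U x) := by
          rw [ENNReal.ofReal_rpow_of_pos (Real.rpow_pos_of_pos hr0 _),
            ENNReal.ofReal_mul hC1.le, show ∀ a b c d : ℝ≥0∞, a * (b * c * d) = b * ((a * c) * d)
              from fun a b c d => by ring,
            ← ENNReal.ofReal_mul (by positivity), hxexp]
  -- Step C : integrate and swap
  have hswapmeas : AEMeasurable (Function.uncurry fun x y =>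
      ENNReal.ofReal (‖x‖ ^ (-(β + (n:ℝ)/2))) * (k x y * (w y)⁻¹ * (G y)^(2:ℝ)))
      ((volume : Measure (EuclideanSpace ℝ (Fin n))).prod volume) := by
    apply Measurable.aemeasurable
    apply Measurable.mul
    · fun_prop
    · apply Measurable.mul
      · apply Measurable.mul
        · fun_prop
        · exact ((hwm.comp measurable_snd).inv)
      · exact (hGm.comp measurable_snd).pow_const _
  have hmain : (∫⁻ x, (ENNReal.ofReal (‖x‖ ^ (-β)) * T x) ^ (2:ℝ) ∂volume)
      ≤ ENNReal.ofReal (C1*C2) * ∫⁻ y, (G y)^(2:ℝ) ∂volume := by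
    calc (∫⁻ x, (ENNReal.ofReal (‖x‖ ^ (-β)) * T x) ^ (2:ℝ) ∂volume)
        ≤ ∫⁻ x, ENNReal.ofReal C1
            * (ENNReal.ofReal (‖x‖ ^ (-(β + (n:ℝ)/2))) * U x) ∂volume := lintegral_mono_ae hB
      _ = ENNReal.ofReal C1
          * ∫⁻ x, ENNReal.ofReal (‖x‖ ^ (-(β + (n:ℝ)/2))) * U x ∂volume :=
          lintegral_const_mul' _ _ ENNReal.ofReal_ne_top
      _ = ENNReal.ofReal C1 * ∫⁻ y, ((w y)⁻¹ * (G y)^(2:ℝ))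
            * ∫⁻ x, ENNReal.ofReal (‖x‖ ^ (-(β + (n:ℝ)/2))) * k x y ∂volume ∂volume := by
          congr 1
          calc (∫⁻ x, ENNReal.ofReal (‖x‖ ^ (-(β + (n:ℝ)/2))) * U x ∂volume)
              = ∫⁻ x, ∫⁻ y, ENNReal.ofReal (‖x‖ ^ (-(β + (n:ℝ)/2)))
                  * (k x y * (w y)⁻¹ * (G y)^(2:ℝ)) ∂volume ∂volume := by
                refine lintegral_congr fun x => ?_
                exact (lintegral_const_mul' _ _ ENNReal.ofReal_ne_top).symm
            _ = ∫⁻ y, ∫⁻ x, ENNReal.ofReal (‖x‖ ^ (-(β + (n:ℝ)/2)))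
                  * (k x y * (w y)⁻¹ * (G y)^(2:ℝ)) ∂volume ∂volume :=
                lintegral_lintegral_swap hswapmeas
            _ = _ := by
                refine lintegral_congr fun y => ?_
                rw [← lintegral_const_mul ((w y)⁻¹ * (G y)^(2:ℝ)) (by fun_prop)]
                refine lintegral_congr fun x => ?_
                ring
      _ ≤ ENNReal.ofReal C1 * ∫⁻ y, ((w y)⁻¹ * (G y)^(2:ℝ))
            * ENNReal.ofReal (C2 * ‖y‖ ^ (-((n:ℝ)/2))) ∂volume := by
          refine mul_le_mul_right (lintegral_mono_ae (hae0.mono fun y hy => ?_)) _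
          refine mul_le_mul_right ?_ _
          have h2 := hK2 y hy
          have hinner : (∫⁻ x, ENNReal.ofReal (‖x‖ ^ (-(β + (n:ℝ)/2))) * k x y ∂volume)
              = ∫⁻ x, ENNReal.ofReal (‖x‖ ^ (-(β + (n:ℝ)/2)))
                  * ENNReal.ofReal (‖y - x‖ ^ (-lam)) ∂volume := by
            refine lintegral_congr fun x => ?_
            rw [hk]
            rw [norm_sub_rev]
          rw [hinner]
          have hexp2 : (n:ℝ) - (β + (n:ℝ)/2) - lam = -((n:ℝ)/2) := by linarith
          rw [← hexp2]
          exact h2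
      _ = ENNReal.ofReal (C1 * C2) * ∫⁻ y, (G y)^(2:ℝ) ∂volume := by
          rw [ENNReal.ofReal_mul hC1.le, mul_assoc]
          congr 1
          calc (∫⁻ y, ((w y)⁻¹ * (G y)^(2:ℝ)) * ENNReal.ofReal (C2 * ‖y‖ ^ (-((n:ℝ)/2))) ∂volume)
              = ∫⁻ y, ENNReal.ofReal C2 * (G y)^(2:ℝ) ∂volume := by
                refine lintegral_congr_ae (hae0.mono fun y hy => ?_)
                have hy0 : (0:ℝ) < ‖y‖ := norm_pos_iff.2 hy
                have hw0 : w y ≠ 0 := by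
                  rw [hw]
                  simp only [ne_eq, ENNReal.ofReal_eq_zero, not_le]
                  positivity
                have hwt : w y ≠ ⊤ := ENNReal.ofReal_ne_top
                show ((w y)⁻¹ * (G y)^(2:ℝ)) * ENNReal.ofReal (C2 * ‖y‖ ^ (-((n:ℝ)/2)))
                    = ENNReal.ofReal C2 * (G y)^(2:ℝ)
                rw [ENNReal.ofReal_mul hC2.le]
                rw [show ENNReal.ofReal (‖y‖ ^ (-((n:ℝ)/2))) = w y from rfl]
                rw [show ((w y)⁻¹ * (G y)^(2:ℝ)) * (ENNReal.ofReal C2 * w y)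
                    = ENNReal.ofReal C2 * (G y)^(2:ℝ) * ((w y)⁻¹ * w y) from by ring,
                  ENNReal.inv_mul_cancel hw0 hwt, mul_one]
            _ = ENNReal.ofReal C2 * ∫⁻ y, (G y)^(2:ℝ) ∂volume :=
                lintegral_const_mul' _ _ ENNReal.ofReal_ne_top
  -- Final assembly
  have h2t : (2:ℝ≥0∞).toReal = 2 := by norm_num
  have hLf : eLpNorm f 2 volume = (∫⁻ y, (G y)^(2:ℝ) ∂volume) ^ (1/2:ℝ) := by
    rw [eLpNorm_congr_ae hfg, eLpNorm_eq_lintegral_rpow_enorm_toReal two_ne_zero ENNReal.ofNat_ne_top,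
      h2t]
    rfl
  rw [eLpNorm_eq_lintegral_rpow_enorm_toReal two_ne_zero ENNReal.ofNat_ne_top, h2t]
  calc (∫⁻ x, (‖(‖x‖ ^ (-β) * ∫ y, ‖x - y‖ ^ (-lam) * f y : ℝ)‖₊ : ℝ≥0∞) ^ (2:ℝ) ∂volume)
        ^ (1/2:ℝ)
      ≤ (∫⁻ x, (ENNReal.ofReal (‖x‖ ^ (-β)) * T x) ^ (2:ℝ) ∂volume) ^ (1/2:ℝ) := by
        gcongr
        exact hA _
    _ ≤ (ENNReal.ofReal (C1*C2) * ∫⁻ y, (G y)^(2:ℝ) ∂volume) ^ (1/2:ℝ) := by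
        gcongr
    _ = ENNReal.ofReal (Real.sqrt (C1*C2)) * (∫⁻ y, (G y)^(2:ℝ) ∂volume) ^ (1/2:ℝ) := by
        rw [ENNReal.mul_rpow_of_nonneg _ _ (by norm_num : (0:ℝ) ≤ 1/2),
          ENNReal.ofReal_rpow_of_pos (by positivity), Real.sqrt_eq_rpow]
    _ = ENNReal.ofReal (Real.sqrt (C1*C2)) * eLpNorm f 2 volume := by rw [hLf]
end

section
/- Let 1 < α < 2 and n ≥ 4 with α < n−2. Suppose h : ℝ^n → ℝ satisfies |h(x)| ≤ K|x|^{1−α} for x ≠ 0, and let T be the convolution operator with kernel bounded by C|x|^{−(n−α+1)}. Then for any L^∞ function ζ supported in a ball of radius N, ‖T(h ζ)‖_{L²} ≤ C′ K ‖ζ‖_{L^∞} N^{n/2}. -/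
open MeasureTheory

open Metric Set
open scoped ENNReal NNReal


private lemma nontriv {n : ℕ} (hn : 0 < n) : Nontrivial (EuclideanSpace ℝ (Fin n)) :=
  Module.nontrivial_of_finrank_pos (R := ℝ) (by rw [finrank_euclideanSpace_fin]; exact hn)

private lemma lintegral_ball_rpow (n : ℕ) (hn : 0 < n) (r : ℝ) (hr : -(n : ℝ) < r)
    (hr0 : r < 0) :
    ∃ c : ℝ≥0∞, c ≠ ⊤ ∧ ∀ N : ℝ, 0 < N →
      ∫⁻ z in ball (0 : EuclideanSpace ℝ (Fin n)) N, (‖z‖₊ : ℝ≥0∞) ^ r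
        ≤ c * ENNReal.ofReal (N ^ ((n : ℝ) + r)) := by
  haveI := nontriv hn
  set E := EuclideanSpace ℝ (Fin n)
  set V : ℝ≥0∞ := volume (ball (0 : E) 1) with hV
  have hVtop : V ≠ ⊤ := measure_ball_lt_top.ne
  set q : ℝ := (2 : ℝ)⁻¹ ^ ((n : ℝ) + r) with hq
  have hnr : 0 < (n : ℝ) + r := by linarith
  have hq0 : 0 ≤ q := Real.rpow_nonneg (by norm_num) _
  have hq1 : q < 1 := Real.rpow_lt_one (by norm_num) (by norm_num) hnr
  refine ⟨ENNReal.ofReal ((2 : ℝ) ^ (-r)) * (1 - ENNReal.ofReal q)⁻¹ * V, ?_, ?_⟩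
  · refine ENNReal.mul_ne_top (ENNReal.mul_ne_top ENNReal.ofReal_ne_top ?_) hVtop
    intro h
    rw [ENNReal.inv_eq_top, tsub_eq_zero_iff_le] at h
    exact absurd h (ENNReal.ofReal_lt_one.mpr hq1).not_ge
  · intro N hN
    set ρ : ℕ → ℝ := fun k => N * (2 : ℝ)⁻¹ ^ k with hρ
    have hρpos : ∀ k, 0 < ρ k := fun k => by rw [hρ]; positivity
    set A : ℕ → Set E := fun k => closedBall 0 (ρ k) \ ball 0 (ρ (k + 1)) with hA
    have hcov : ball (0 : E) N \ {0} ⊆ ⋃ k, A k := by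
      intro z hz
      obtain ⟨hzN, hz0⟩ := hz
      rw [mem_ball_zero_iff] at hzN
      have hz0' : 0 < ‖z‖ := by
        simp only [mem_singleton_iff] at hz0
        exact norm_pos_iff.mpr hz0
      have hex : ∃ m : ℕ, N * (2 : ℝ)⁻¹ ^ (m + 1) ≤ ‖z‖ := by
        obtain ⟨m, hm⟩ := exists_pow_lt_of_lt_one (x := ‖z‖ / N) (y := (2:ℝ)⁻¹)
          (by positivity) (by norm_num)
        refine ⟨m, ?_⟩
        have h1 : N * (2:ℝ)⁻¹ ^ (m+1) ≤ N * (2:ℝ)⁻¹ ^ m :=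
          mul_le_mul_of_nonneg_left
            (pow_le_pow_of_le_one (by norm_num) (by norm_num) (by omega)) hN.le
        refine h1.trans ?_
        have h2 := mul_lt_mul_of_pos_left hm hN
        rw [mul_div_cancel₀ _ hN.ne'] at h2
        linarith
      classical
      refine mem_iUnion.mpr ⟨Nat.find hex, ?_, ?_⟩
      · rw [mem_closedBall_zero_iff]
        rcases Nat.eq_zero_or_pos (Nat.find hex) with h0 | hpos
        · rw [h0]; simpa [hρ] using hzN.le
        · have hmin := Nat.find_min hex (m := Nat.find hex - 1) (by omega)
          push_neg at hmin
          have h2 : Nat.find hex - 1 + 1 = Nat.find hex := by omega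
          rw [h2] at hmin
          exact hmin.le
      · rw [mem_ball_zero_iff, not_lt]
        exact Nat.find_spec hex
    have hAmeas : ∀ k, MeasurableSet (A k) :=
      fun k => measurableSet_closedBall.diff measurableSet_ball
    have hterm : ∀ k, ∫⁻ z in A k, (‖z‖₊ : ℝ≥0∞) ^ r
        ≤ ENNReal.ofReal ((2 : ℝ) ^ (-r)) * ENNReal.ofReal (N ^ ((n : ℝ) + r)) *
            ENNReal.ofReal q ^ k * V := by
      intro k
      have hb : ∀ z ∈ A k, (‖z‖₊ : ℝ≥0∞) ^ r ≤ ENNReal.ofReal (ρ (k+1) ^ r) := by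
        intro z hz
        have h1 : ρ (k+1) ≤ ‖z‖ := by
          have := hz.2
          rwa [mem_ball_zero_iff, not_lt] at this
        have hzpos : 0 < ‖z‖ := lt_of_lt_of_le (hρpos _) h1
        calc (‖z‖₊ : ℝ≥0∞) ^ r = ENNReal.ofReal (‖z‖ ^ r) := by
              rw [← enorm_eq_nnnorm, ← ofReal_norm, ENNReal.ofReal_rpow_of_pos hzpos]
          _ ≤ _ := ENNReal.ofReal_le_ofReal
              (Real.rpow_le_rpow_of_nonpos (hρpos _) h1 hr0.le)
      calc ∫⁻ z in A k, (‖z‖₊ : ℝ≥0∞) ^ r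
          ≤ ∫⁻ _ in A k, ENNReal.ofReal (ρ (k+1) ^ r) := by
            refine lintegral_mono_ae ?_
            filter_upwards [ae_restrict_mem (hAmeas k)] with z hz using hb z hz
        _ = ENNReal.ofReal (ρ (k+1) ^ r) * volume (A k) := setLIntegral_const _ _
        _ ≤ ENNReal.ofReal (ρ (k+1) ^ r) * (ENNReal.ofReal (ρ k ^ n) * V) := by
            refine mul_le_mul_right ?_ _
            calc volume (A k) ≤ volume (closedBall (0 : E) (ρ k)) :=
                  measure_mono diff_subset
              _ = ENNReal.ofReal (ρ k ^ n) * V := by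
                  rw [Measure.addHaar_closedBall volume 0 (hρpos k).le,
                    finrank_euclideanSpace_fin]
        _ = ENNReal.ofReal ((2 : ℝ) ^ (-r)) * ENNReal.ofReal (N ^ ((n : ℝ) + r)) *
              ENNReal.ofReal q ^ k * V := by
            have key : ρ (k+1) ^ r * ρ k ^ (n : ℕ)
                = (2 : ℝ) ^ (-r) * (N ^ ((n : ℝ) + r) * q ^ k) := by
              have e1 : ρ (k+1) = 2⁻¹ * ρ k := by rw [hρ]; ring
              have e2 : (ρ k : ℝ) ^ (n : ℕ) = ρ k ^ ((n : ℕ) : ℝ) :=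
                (Real.rpow_natCast _ _).symm
              rw [e1, Real.mul_rpow (by norm_num) (hρpos k).le, e2, mul_assoc,
                ← Real.rpow_add (hρpos k)]
              have e3 : ((2 : ℝ)⁻¹) ^ r = (2 : ℝ) ^ (-r) := by
                rw [Real.inv_rpow (by norm_num), ← Real.rpow_neg (by norm_num)]
              have e4 : ρ k ^ (r + (n : ℝ)) = N ^ ((n : ℝ) + r) * q ^ k := by
                rw [hρ, show r + (n : ℝ) = (n : ℝ) + r by ring]
                rw [Real.mul_rpow hN.le (by positivity),
                  ← Real.rpow_natCast ((2:ℝ)⁻¹) k, ← Real.rpow_mul (by norm_num),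
                  mul_comm (k : ℝ) ((n : ℝ) + r), Real.rpow_mul (by norm_num),
                  Real.rpow_natCast]
              rw [e3, e4]
            rw [← mul_assoc, ← ENNReal.ofReal_mul (by positivity), key,
              ENNReal.ofReal_mul (by positivity),
              ENNReal.ofReal_mul (by positivity),
              ENNReal.ofReal_pow hq0]
            ring
    calc ∫⁻ z in ball (0 : E) N, (‖z‖₊ : ℝ≥0∞) ^ r
        = ∫⁻ z in ball (0 : E) N \ {0}, (‖z‖₊ : ℝ≥0∞) ^ r := by
          refine setLIntegral_congr ?_
          refine (MeasureTheory.diff_ae_eq_self.mpr ?_).symm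
          exact measure_inter_null_of_null_right _ (measure_singleton 0)
      _ ≤ ∫⁻ z in ⋃ k, A k, (‖z‖₊ : ℝ≥0∞) ^ r := lintegral_mono_set hcov
      _ ≤ ∑' k, ∫⁻ z in A k, (‖z‖₊ : ℝ≥0∞) ^ r := lintegral_iUnion_le _ _
      _ ≤ ∑' k, ENNReal.ofReal ((2 : ℝ) ^ (-r)) * ENNReal.ofReal (N ^ ((n : ℝ) + r)) *
            ENNReal.ofReal q ^ k * V := ENNReal.tsum_le_tsum hterm
      _ = ENNReal.ofReal ((2 : ℝ) ^ (-r)) * (1 - ENNReal.ofReal q)⁻¹ * V *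
            ENNReal.ofReal (N ^ ((n : ℝ) + r)) := by
          have hrw : ∀ k : ℕ, ENNReal.ofReal ((2 : ℝ) ^ (-r)) *
              ENNReal.ofReal (N ^ ((n : ℝ) + r)) * ENNReal.ofReal q ^ k * V
              = (ENNReal.ofReal ((2 : ℝ) ^ (-r)) * ENNReal.ofReal (N ^ ((n : ℝ) + r)) * V) *
                ENNReal.ofReal q ^ k := fun k => by ring
          rw [tsum_congr hrw, ENNReal.tsum_mul_left, ENNReal.tsum_geometric]
          ring
private lemma lintegral_compl_ball_rpow (n : ℕ) (hn : 0 < n) (r : ℝ) (hr : r < -(n : ℝ)) :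
    ∃ c : ℝ≥0∞, c ≠ ⊤ ∧ ∀ N : ℝ, 0 < N →
      ∫⁻ z in (ball (0 : EuclideanSpace ℝ (Fin n)) N)ᶜ, (‖z‖₊ : ℝ≥0∞) ^ r
        ≤ c * ENNReal.ofReal (N ^ ((n : ℝ) + r)) := by
  haveI := nontriv hn
  set E := EuclideanSpace ℝ (Fin n)
  set V : ℝ≥0∞ := volume (ball (0 : E) 1) with hV
  have hVtop : V ≠ ⊤ := measure_ball_lt_top.ne
  set q : ℝ := (2 : ℝ) ^ ((n : ℝ) + r) with hq
  have hnr : (n : ℝ) + r < 0 := by linarith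
  have hr0 : r < 0 := by
    have : (0:ℝ) ≤ n := Nat.cast_nonneg n
    linarith
  have hq0 : 0 ≤ q := Real.rpow_nonneg (by norm_num) _
  have hq1 : q < 1 := Real.rpow_lt_one_of_one_lt_of_neg (by norm_num) hnr
  refine ⟨ENNReal.ofReal ((2 : ℝ) ^ (n : ℕ)) * (1 - ENNReal.ofReal q)⁻¹ * V, ?_, ?_⟩
  · refine ENNReal.mul_ne_top (ENNReal.mul_ne_top ENNReal.ofReal_ne_top ?_) hVtop
    intro h
    rw [ENNReal.inv_eq_top, tsub_eq_zero_iff_le] at h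
    exact absurd h (ENNReal.ofReal_lt_one.mpr hq1).not_ge
  · intro N hN
    set ρ : ℕ → ℝ := fun k => N * (2 : ℝ) ^ k with hρ
    have hρpos : ∀ k, 0 < ρ k := fun k => by rw [hρ]; positivity
    set A : ℕ → Set E := fun k => closedBall 0 (ρ (k + 1)) \ ball 0 (ρ k) with hA
    have hcov : (ball (0 : E) N)ᶜ ⊆ ⋃ k, A k := by
      intro z hz
      rw [mem_compl_iff, mem_ball_zero_iff, not_lt] at hz
      have hex : ∃ m : ℕ, ‖z‖ ≤ N * (2 : ℝ) ^ (m + 1) := by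
        obtain ⟨m, hm⟩ := pow_unbounded_of_one_lt (‖z‖ / N) (y := (2:ℝ)) (by norm_num)
        refine ⟨m, ?_⟩
        have h2 := mul_lt_mul_of_pos_left hm hN
        rw [mul_div_cancel₀ _ hN.ne'] at h2
        have h3 : N * (2:ℝ) ^ m ≤ N * 2 ^ (m+1) := by
          apply mul_le_mul_of_nonneg_left _ hN.le
          apply pow_le_pow_right₀ (by norm_num) (by omega)
        linarith
      classical
      refine mem_iUnion.mpr ⟨Nat.find hex, ?_, ?_⟩
      · rw [mem_closedBall_zero_iff]
        exact Nat.find_spec hex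
      · rw [mem_ball_zero_iff, not_lt]
        rcases Nat.eq_zero_or_pos (Nat.find hex) with h0 | hpos
        · rw [h0]; simpa [hρ] using hz
        · have hmin := Nat.find_min hex (m := Nat.find hex - 1) (by omega)
          push_neg at hmin
          have h2 : Nat.find hex - 1 + 1 = Nat.find hex := by omega
          rw [h2] at hmin
          exact hmin.le
    have hAmeas : ∀ k, MeasurableSet (A k) :=
      fun k => measurableSet_closedBall.diff measurableSet_ball
    have hterm : ∀ k, ∫⁻ z in A k, (‖z‖₊ : ℝ≥0∞) ^ r
        ≤ ENNReal.ofReal ((2 : ℝ) ^ (n : ℕ)) * ENNReal.ofReal (N ^ ((n : ℝ) + r)) *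
            ENNReal.ofReal q ^ k * V := by
      intro k
      have hb : ∀ z ∈ A k, (‖z‖₊ : ℝ≥0∞) ^ r ≤ ENNReal.ofReal (ρ k ^ r) := by
        intro z hz
        have h1 : ρ k ≤ ‖z‖ := by
          have := hz.2
          rwa [mem_ball_zero_iff, not_lt] at this
        have hzpos : 0 < ‖z‖ := lt_of_lt_of_le (hρpos _) h1
        calc (‖z‖₊ : ℝ≥0∞) ^ r = ENNReal.ofReal (‖z‖ ^ r) := by
              rw [← enorm_eq_nnnorm, ← ofReal_norm, ENNReal.ofReal_rpow_of_pos hzpos]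
          _ ≤ _ := ENNReal.ofReal_le_ofReal
              (Real.rpow_le_rpow_of_nonpos (hρpos _) h1 hr0.le)
      calc ∫⁻ z in A k, (‖z‖₊ : ℝ≥0∞) ^ r
          ≤ ∫⁻ _ in A k, ENNReal.ofReal (ρ k ^ r) := by
            refine lintegral_mono_ae ?_
            filter_upwards [ae_restrict_mem (hAmeas k)] with z hz using hb z hz
        _ = ENNReal.ofReal (ρ k ^ r) * volume (A k) := setLIntegral_const _ _
        _ ≤ ENNReal.ofReal (ρ k ^ r) * (ENNReal.ofReal (ρ (k + 1) ^ n) * V) := by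
            refine mul_le_mul_right ?_ _
            calc volume (A k) ≤ volume (closedBall (0 : E) (ρ (k + 1))) :=
                  measure_mono diff_subset
              _ = ENNReal.ofReal (ρ (k + 1) ^ n) * V := by
                  rw [Measure.addHaar_closedBall volume 0 (hρpos (k + 1)).le,
                    finrank_euclideanSpace_fin]
        _ = ENNReal.ofReal ((2 : ℝ) ^ (n : ℕ)) * ENNReal.ofReal (N ^ ((n : ℝ) + r)) *
              ENNReal.ofReal q ^ k * V := by
            have key : ρ k ^ r * ρ (k + 1) ^ (n : ℕ)
                = (2 : ℝ) ^ (n : ℕ) * (N ^ ((n : ℝ) + r) * q ^ k) := by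
              have e1 : ρ (k + 1) = 2 * ρ k := by rw [hρ]; ring
              have e2 : (ρ (k + 1) : ℝ) ^ (n : ℕ) = (2:ℝ) ^ (n : ℕ) * ρ k ^ (n : ℕ) := by
                rw [e1, mul_pow]
              have e3 : (ρ k : ℝ) ^ (n : ℕ) = ρ k ^ ((n : ℕ) : ℝ) :=
                (Real.rpow_natCast _ _).symm
              rw [e2, e3, mul_comm (ρ k ^ r), mul_assoc, ← Real.rpow_add (hρpos k)]
              have e4 : ρ k ^ ((n : ℝ) + r) = N ^ ((n : ℝ) + r) * q ^ k := by
                rw [hρ]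
                rw [Real.mul_rpow hN.le (by positivity),
                  ← Real.rpow_natCast ((2:ℝ)) k, ← Real.rpow_mul (by norm_num),
                  mul_comm (k : ℝ) ((n : ℝ) + r), Real.rpow_mul (by norm_num),
                  Real.rpow_natCast]
              rw [show ((n:ℕ):ℝ) + r = (n:ℝ) + r from rfl, e4]
            rw [← mul_assoc, ← ENNReal.ofReal_mul (by positivity), key,
              ENNReal.ofReal_mul (by positivity),
              ENNReal.ofReal_mul (by positivity),
              ENNReal.ofReal_pow hq0]
            ring
    calc ∫⁻ z in (ball (0 : E) N)ᶜ, (‖z‖₊ : ℝ≥0∞) ^ r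
        ≤ ∫⁻ z in ⋃ k, A k, (‖z‖₊ : ℝ≥0∞) ^ r := lintegral_mono_set hcov
      _ ≤ ∑' k, ∫⁻ z in A k, (‖z‖₊ : ℝ≥0∞) ^ r := lintegral_iUnion_le _ _
      _ ≤ ∑' k, ENNReal.ofReal ((2 : ℝ) ^ (n : ℕ)) * ENNReal.ofReal (N ^ ((n : ℝ) + r)) *
            ENNReal.ofReal q ^ k * V := ENNReal.tsum_le_tsum hterm
      _ = ENNReal.ofReal ((2 : ℝ) ^ (n : ℕ)) * (1 - ENNReal.ofReal q)⁻¹ * V *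
            ENNReal.ofReal (N ^ ((n : ℝ) + r)) := by
          have hrw : ∀ k : ℕ, ENNReal.ofReal ((2 : ℝ) ^ (n : ℕ)) *
              ENNReal.ofReal (N ^ ((n : ℝ) + r)) * ENNReal.ofReal q ^ k * V
              = (ENNReal.ofReal ((2 : ℝ) ^ (n : ℕ)) * ENNReal.ofReal (N ^ ((n : ℝ) + r)) * V) *
                ENNReal.ofReal q ^ k := fun k => by ring
          rw [tsum_congr hrw, ENNReal.tsum_mul_left, ENNReal.tsum_geometric]
          ring
private lemma lintegral_closedBall_rpow (n : ℕ) (hn : 0 < n) (r : ℝ) (hr : -(n : ℝ) < r)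
    (hr0 : r < 0) :
    ∃ c : ℝ≥0∞, c ≠ ⊤ ∧ ∀ N : ℝ, 0 < N → ∀ x₀ : EuclideanSpace ℝ (Fin n),
      ∫⁻ y in closedBall x₀ N, (‖y‖₊ : ℝ≥0∞) ^ r
        ≤ c * ENNReal.ofReal (N ^ ((n : ℝ) + r)) := by
  haveI := nontriv hn
  set E := EuclideanSpace ℝ (Fin n)
  set V : ℝ≥0∞ := volume (ball (0 : E) 1) with hV
  have hVtop : V ≠ ⊤ := measure_ball_lt_top.ne
  obtain ⟨c₀, hc₀top, hball⟩ := lintegral_ball_rpow n hn r hr hr0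
  refine ⟨c₀ + V, by simp [ENNReal.add_ne_top, hc₀top, hVtop], ?_⟩
  intro N hN x₀
  have hsub : closedBall x₀ N ⊆ ball (0 : E) N ∪ (closedBall x₀ N \ ball (0 : E) N) := by
    intro z hz
    by_cases h : z ∈ ball (0 : E) N
    · exact Or.inl h
    · exact Or.inr ⟨hz, h⟩
  calc ∫⁻ y in closedBall x₀ N, (‖y‖₊ : ℝ≥0∞) ^ r
      ≤ ∫⁻ y in ball (0 : E) N ∪ (closedBall x₀ N \ ball (0 : E) N),
          (‖y‖₊ : ℝ≥0∞) ^ r := lintegral_mono_set hsub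
    _ ≤ (∫⁻ y in ball (0 : E) N, (‖y‖₊ : ℝ≥0∞) ^ r)
        + ∫⁻ y in closedBall x₀ N \ ball (0 : E) N, (‖y‖₊ : ℝ≥0∞) ^ r :=
          lintegral_union_le _ _ _
    _ ≤ c₀ * ENNReal.ofReal (N ^ ((n : ℝ) + r)) + V * ENNReal.ofReal (N ^ ((n : ℝ) + r)) := by
        refine add_le_add (hball N hN) ?_
        have hb : ∀ z ∈ closedBall x₀ N \ ball (0 : E) N,
            (‖z‖₊ : ℝ≥0∞) ^ r ≤ ENNReal.ofReal (N ^ r) := by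
          intro z hz
          have h1 : N ≤ ‖z‖ := by
            have := hz.2
            rwa [mem_ball_zero_iff, not_lt] at this
          calc (‖z‖₊ : ℝ≥0∞) ^ r = ENNReal.ofReal (‖z‖ ^ r) := by
                rw [← enorm_eq_nnnorm, ← ofReal_norm,
                  ENNReal.ofReal_rpow_of_pos (lt_of_lt_of_le hN h1)]
            _ ≤ _ := ENNReal.ofReal_le_ofReal
                (Real.rpow_le_rpow_of_nonpos hN h1 hr0.le)
        calc ∫⁻ y in closedBall x₀ N \ ball (0 : E) N, (‖y‖₊ : ℝ≥0∞) ^ r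
            ≤ ∫⁻ _ in closedBall x₀ N \ ball (0 : E) N, ENNReal.ofReal (N ^ r) := by
              refine lintegral_mono_ae ?_
              filter_upwards [ae_restrict_mem
                (measurableSet_closedBall.diff measurableSet_ball)] with z hz using hb z hz
          _ = ENNReal.ofReal (N ^ r) * volume (closedBall x₀ N \ ball (0 : E) N) :=
              setLIntegral_const _ _
          _ ≤ ENNReal.ofReal (N ^ r) * (ENNReal.ofReal (N ^ (n : ℕ)) * V) := by
              refine mul_le_mul_right ?_ _
              calc volume (closedBall x₀ N \ ball (0 : E) N)
                  ≤ volume (closedBall x₀ N) := measure_mono diff_subset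
                _ = ENNReal.ofReal (N ^ (n : ℕ)) * V := by
                    rw [Measure.addHaar_closedBall volume x₀ hN.le,
                      finrank_euclideanSpace_fin]
          _ = V * ENNReal.ofReal (N ^ ((n : ℝ) + r)) := by
              rw [← mul_assoc, ← ENNReal.ofReal_mul (by positivity)]
              have : N ^ r * N ^ (n : ℕ) = N ^ ((n : ℝ) + r) := by
                rw [← Real.rpow_natCast N n, ← Real.rpow_add hN]
                ring_nf
              rw [this]
              ring
    _ = (c₀ + V) * ENNReal.ofReal (N ^ ((n : ℝ) + r)) := by ring
private lemma conv_comm {n : ℕ} (a b : EuclideanSpace ℝ (Fin n) → ℝ≥0∞)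
    (ha : Measurable a) (hb : Measurable b) (x : EuclideanSpace ℝ (Fin n)) :
    ∫⁻ y, a (x - y) * b y = ∫⁻ y, b (x - y) * a y := by
  have key := (Measure.measurePreserving_sub_left (volume : Measure (EuclideanSpace ℝ (Fin n))) x).lintegral_comp
    (f := fun y => a y * b (x - y)) (ha.mul (hb.comp (measurable_const.sub measurable_id)))
  simp only [sub_sub_cancel] at key
  calc ∫⁻ y, a (x - y) * b y = ∫⁻ y, a y * b (x - y) := key
    _ = ∫⁻ y, b (x - y) * a y := by simp only [mul_comm]

private lemma young_one {n : ℕ} (a b : EuclideanSpace ℝ (Fin n) → ℝ≥0∞)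
    (ha : Measurable a) (hb : Measurable b) :
    ∫⁻ x, (∫⁻ y, a (x - y) * b y) ^ (2 : ℝ)
      ≤ (∫⁻ z, a z) ^ (2 : ℝ) * ∫⁻ z, (b z) ^ (2 : ℝ) := by
  let E := EuclideanSpace ℝ (Fin n)
  have hsub : ∀ x : E, Measurable fun y : E => a (x - y) :=
    fun x => by fun_prop
  have hmeas2 : Measurable fun p : E × E => a (p.1 - p.2) * (b p.2) ^ (2 : ℝ) := by
    fun_prop
  have step1 : ∀ x : E, (∫⁻ y, a (x - y) * b y) ^ (2 : ℝ)
      ≤ (∫⁻ z, a z) * ∫⁻ y, a (x - y) * (b y) ^ (2 : ℝ) := by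
    intro x
    have hconj : Real.HolderConjugate 2 2 := by constructor <;> norm_num
    have cs := ENNReal.lintegral_mul_le_Lp_mul_Lq (volume : Measure E) hconj
      (f := fun y => (a (x - y)) ^ (1/2 : ℝ))
      (g := fun y => (a (x - y)) ^ (1/2 : ℝ) * b y)
      ((hsub x).pow_const _).aemeasurable (((hsub x).pow_const _).mul hb).aemeasurable
    have hfg : (fun y => (a (x - y)) ^ (1/2 : ℝ) * ((a (x - y)) ^ (1/2 : ℝ) * b y))
        = fun y => a (x - y) * b y := by
      funext y
      rw [← mul_assoc, ← sq, ← ENNReal.rpow_natCast (a (x - y) ^ (1/2:ℝ)) 2,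
        ← ENNReal.rpow_mul]
      norm_num
    have h1 : (fun y => ((a (x - y)) ^ (1/2 : ℝ)) ^ (2:ℝ)) = fun y => a (x - y) := by
      funext y; rw [← ENNReal.rpow_mul]; norm_num
    have h2 : (fun y => ((a (x - y)) ^ (1/2 : ℝ) * b y) ^ (2:ℝ))
        = fun y => a (x - y) * (b y) ^ (2:ℝ) := by
      funext y
      rw [ENNReal.mul_rpow_of_nonneg _ _ (by norm_num), ← ENNReal.rpow_mul]
      norm_num
    simp only [Pi.mul_apply] at cs
    rw [hfg] at cs
    calc (∫⁻ y, a (x - y) * b y) ^ (2 : ℝ)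
        ≤ ((∫⁻ y, ((a (x - y)) ^ (1/2:ℝ)) ^ (2:ℝ)) ^ (1/2:ℝ)
            * (∫⁻ y, ((a (x - y)) ^ (1/2:ℝ) * b y) ^ (2:ℝ)) ^ (1/2:ℝ)) ^ (2:ℝ) :=
          ENNReal.rpow_le_rpow cs (by norm_num)
      _ = (∫⁻ y, a (x - y)) * ∫⁻ y, a (x - y) * (b y) ^ (2:ℝ) := by
          rw [h1, h2, ENNReal.mul_rpow_of_nonneg _ _ (by norm_num : (0:ℝ) ≤ 2),
            ← ENNReal.rpow_mul, ← ENNReal.rpow_mul]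
          norm_num
      _ = (∫⁻ z, a z) * ∫⁻ y, a (x - y) * (b y) ^ (2:ℝ) := by
          rw [(Measure.measurePreserving_sub_left (volume : Measure E) x).lintegral_comp ha]
  calc ∫⁻ x, (∫⁻ y, a (x - y) * b y) ^ (2 : ℝ)
      ≤ ∫⁻ x, (∫⁻ z, a z) * ∫⁻ y, a (x - y) * (b y) ^ (2 : ℝ) := lintegral_mono step1
    _ = (∫⁻ z, a z) * ∫⁻ x, ∫⁻ y, a (x - y) * (b y) ^ (2 : ℝ) :=
        lintegral_const_mul _ (Measurable.lintegral_prod_right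
          (f := fun (x y : E) => a (x - y) * (b y) ^ (2 : ℝ)) hmeas2)
    _ = (∫⁻ z, a z) * ∫⁻ y, ∫⁻ x, a (x - y) * (b y) ^ (2 : ℝ) := by
        rw [lintegral_lintegral_swap (f := fun (x y : E) => a (x - y) * (b y) ^ (2 : ℝ))
          hmeas2.aemeasurable]
    _ = (∫⁻ z, a z) * ∫⁻ y, (∫⁻ z, a z) * (b y) ^ (2 : ℝ) := by
        congr 1
        refine lintegral_congr fun y => ?_
        rw [lintegral_mul_const _ (show Measurable fun x : E => a (x - y) by fun_prop),
          lintegral_sub_right_eq_self a y, mul_comm]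
    _ = (∫⁻ z, a z) ^ (2 : ℝ) * ∫⁻ z, (b z) ^ (2 : ℝ) := by
        rw [lintegral_const_mul _ (hb.pow_const _), ← mul_assoc, ← sq,
          ← ENNReal.rpow_natCast (∫⁻ z, a z) 2]
        norm_num


/-- Let `1 < α < 2`, `n ≥ 4`, `α < n - 2`. If `|h(x)| ≤ K|x|^{1-α}` for `x ≠ 0`,
`T` is convolution with a kernel bounded by `Ck |x|^{-(n-α+1)}`, and `ζ` is an
`L^∞` function supported in a ball of radius `N`, then
`‖T(hζ)‖_{L²} ≤ C' K ‖ζ‖_{L^∞} N^{n/2}`. -/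
theorem conv_op_bump_L2_bound (n : ℕ) (hn : 4 ≤ n) (α : ℝ) (hα1 : 1 < α)
    (hα2 : α < 2) (hαn : α < (n : ℝ) - 2) (Ck : ℝ) (hCk : 0 < Ck) :
    ∃ C' > 0, ∀ (k h ζ : EuclideanSpace ℝ (Fin n) → ℝ) (K Cζ N : ℝ)
      (x₀ : EuclideanSpace ℝ (Fin n)),
      0 ≤ K → 0 ≤ Cζ → 0 < N →
      (∀ z : EuclideanSpace ℝ (Fin n), z ≠ 0 →
        |k z| ≤ Ck * ‖z‖ ^ (-((n : ℝ) - α + 1))) →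
      (∀ x : EuclideanSpace ℝ (Fin n), x ≠ 0 → |h x| ≤ K * ‖x‖ ^ (1 - α)) →
      (∀ x, |ζ x| ≤ Cζ) →
      (∀ x : EuclideanSpace ℝ (Fin n), ζ x ≠ 0 → ‖x - x₀‖ ≤ N) →
      eLpNorm (fun x : EuclideanSpace ℝ (Fin n) =>
          ∫ y, k (x - y) * (h y * ζ y)) 2 volume
        ≤ ENNReal.ofReal (C' * K * Cζ * N ^ ((n : ℝ) / 2)) := by
  have hn0 : 0 < n := by omega
  haveI := nontriv hn0
  have hnR : (4 : ℝ) ≤ (n : ℝ) := by exact_mod_cast hn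
  set lam : ℝ := (n : ℝ) - α + 1 with hlam
  obtain ⟨c1, hc1top, hc1⟩ := lintegral_ball_rpow n hn0 (-lam)
    (by rw [hlam]; linarith) (by rw [hlam]; linarith)
  obtain ⟨c2, hc2top, hc2⟩ := lintegral_compl_ball_rpow n hn0 (-lam * 2)
    (by rw [hlam]; linarith)
  obtain ⟨c3, hc3top, hc3⟩ := lintegral_closedBall_rpow n hn0 ((1 - α) * 2)
    (by linarith) (by linarith)
  obtain ⟨c4, hc4top, hc4⟩ := lintegral_closedBall_rpow n hn0 (1 - α)
    (by linarith) (by linarith)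
  set Ctot : ℝ≥0∞ := ENNReal.ofReal Ck * (c1 * c3 ^ (1/2 : ℝ) + c2 ^ (1/2 : ℝ) * c4)
    with hCtotdef
  have hCtotTop : Ctot ≠ ⊤ := by
    rw [hCtotdef]
    refine ENNReal.mul_ne_top ENNReal.ofReal_ne_top (ENNReal.add_ne_top.mpr ⟨?_, ?_⟩)
    · exact ENNReal.mul_ne_top hc1top (ENNReal.rpow_ne_top_of_nonneg (by norm_num) hc3top)
    · exact ENNReal.mul_ne_top (ENNReal.rpow_ne_top_of_nonneg (by norm_num) hc2top) hc4top
  refine ⟨Ctot.toReal + 1, by positivity, ?_⟩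
  intro k h ζ K Cζ N x₀ hK hCζ hN hkb hhb hζb hζsupp
  set κ : EuclideanSpace ℝ (Fin n) → ℝ≥0∞ :=
    fun z => ENNReal.ofReal Ck * (‖z‖₊ : ℝ≥0∞) ^ (-lam) with hκdef
  have hκm : Measurable κ :=
    measurable_const.mul (measurable_nnnorm.coe_nnreal_ennreal.pow_const _)
  set W : EuclideanSpace ℝ (Fin n) → ℝ≥0∞ :=
    (Metric.closedBall x₀ N).indicator
      (fun y => ENNReal.ofReal (K * Cζ) * (‖y‖₊ : ℝ≥0∞) ^ (1 - α)) with hWdef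
  have hWm : Measurable W :=
    (measurable_const.mul (measurable_nnnorm.coe_nnreal_ennreal.pow_const _)).indicator
      measurableSet_closedBall
  -- pointwise domination
  have hpoint : ∀ x : EuclideanSpace ℝ (Fin n),
      (‖∫ y, k (x - y) * (h y * ζ y)‖₊ : ℝ≥0∞) ≤ ∫⁻ y, κ (x - y) * W y := by
    intro x
    by_cases hint : Integrable (fun y => k (x - y) * (h y * ζ y)) volume
    · refine le_trans (enorm_integral_le_lintegral_enorm _) ?_
      refine lintegral_mono_ae ?_
      have hxae : ∀ᵐ y : EuclideanSpace ℝ (Fin n) ∂volume, y ≠ x := by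
        have hset : {y : EuclideanSpace ℝ (Fin n) | ¬ y ≠ x} = {x} := by ext y; simp
        rw [ae_iff, hset]
        exact measure_singleton x
      have h0ae : ∀ᵐ y : EuclideanSpace ℝ (Fin n) ∂volume, y ≠ 0 := by
        have hset : {y : EuclideanSpace ℝ (Fin n) | ¬ y ≠ 0} = {0} := by ext y; simp
        rw [ae_iff, hset]
        exact measure_singleton 0
      filter_upwards [hxae, h0ae] with y hyx hy0
      by_cases hζy : ζ y = 0
      · simp [hζy]
      · have hyball : y ∈ Metric.closedBall x₀ N := by
          rw [Metric.mem_closedBall, dist_eq_norm]; exact hζsupp y hζy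
        have hWy : W y = ENNReal.ofReal (K * Cζ) * (‖y‖₊ : ℝ≥0∞) ^ (1 - α) := by
          rw [hWdef, indicator_of_mem hyball]
        have hxy : x - y ≠ 0 := sub_ne_zero.mpr (Ne.symm hyx)
        have hxypos : 0 < ‖x - y‖ := norm_pos_iff.mpr hxy
        have hypos : 0 < ‖y‖ := norm_pos_iff.mpr hy0
        have e1 : (‖k (x - y)‖₊ : ℝ≥0∞) ≤ ENNReal.ofReal Ck * (‖x - y‖₊ : ℝ≥0∞) ^ (-lam) := by
          calc (‖k (x - y)‖₊ : ℝ≥0∞) = ENNReal.ofReal |k (x - y)| := by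
                rw [← enorm_eq_nnnorm, ← ofReal_norm, Real.norm_eq_abs]
            _ ≤ ENNReal.ofReal (Ck * ‖x - y‖ ^ (-lam)) :=
                ENNReal.ofReal_le_ofReal (hkb (x - y) hxy)
            _ = _ := by
                rw [ENNReal.ofReal_mul hCk.le, ← enorm_eq_nnnorm, ← ofReal_norm,
                  ENNReal.ofReal_rpow_of_pos hxypos]
        have e2 : (‖h y‖₊ : ℝ≥0∞) ≤ ENNReal.ofReal K * (‖y‖₊ : ℝ≥0∞) ^ (1 - α) := by
          calc (‖h y‖₊ : ℝ≥0∞) = ENNReal.ofReal |h y| := by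
                rw [← enorm_eq_nnnorm, ← ofReal_norm, Real.norm_eq_abs]
            _ ≤ ENNReal.ofReal (K * ‖y‖ ^ (1 - α)) :=
                ENNReal.ofReal_le_ofReal (hhb y hy0)
            _ = _ := by
                rw [ENNReal.ofReal_mul hK, ← enorm_eq_nnnorm, ← ofReal_norm,
                  ENNReal.ofReal_rpow_of_pos hypos]
        have e3 : (‖ζ y‖₊ : ℝ≥0∞) ≤ ENNReal.ofReal Cζ := by
          rw [← enorm_eq_nnnorm, ← ofReal_norm, Real.norm_eq_abs]
          exact ENNReal.ofReal_le_ofReal (hζb y)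
        calc (‖k (x - y) * (h y * ζ y)‖₊ : ℝ≥0∞)
            = (‖k (x - y)‖₊ : ℝ≥0∞) * ((‖h y‖₊ : ℝ≥0∞) * (‖ζ y‖₊ : ℝ≥0∞)) := by
              rw [nnnorm_mul, nnnorm_mul]; push_cast; ring
          _ ≤ (ENNReal.ofReal Ck * (‖x - y‖₊ : ℝ≥0∞) ^ (-lam)) *
                ((ENNReal.ofReal K * (‖y‖₊ : ℝ≥0∞) ^ (1 - α)) * ENNReal.ofReal Cζ) :=
              mul_le_mul' e1 (mul_le_mul' e2 e3)
          _ = κ (x - y) * W y := by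
              rw [hWy, hκdef, ENNReal.ofReal_mul hK]; ring
    · rw [integral_undef hint]; simp
  set κ1 : EuclideanSpace ℝ (Fin n) → ℝ≥0∞ :=
    (Metric.ball (0 : EuclideanSpace ℝ (Fin n)) N).indicator κ with hκ1def
  set κ2 : EuclideanSpace ℝ (Fin n) → ℝ≥0∞ :=
    ((Metric.ball (0 : EuclideanSpace ℝ (Fin n)) N)ᶜ).indicator κ with hκ2def
  have hκ1m : Measurable κ1 := hκm.indicator measurableSet_ball
  have hκ2m : Measurable κ2 := hκm.indicator measurableSet_ball.compl
  have hsplit : ∀ x : EuclideanSpace ℝ (Fin n),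
      (∫⁻ y, κ (x - y) * W y) = (∫⁻ y, κ1 (x - y) * W y) + (∫⁻ y, κ2 (x - y) * W y) := by
    intro x
    rw [← lintegral_add_left (by fun_prop)]
    refine lintegral_congr fun y => ?_
    have hκeq : κ1 (x - y) + κ2 (x - y) = κ (x - y) :=
      congrFun (indicator_self_add_compl (Metric.ball (0 : EuclideanSpace ℝ (Fin n)) N) κ) (x - y)
    rw [← hκeq, add_mul]
  have hG1m : AEMeasurable (fun x : EuclideanSpace ℝ (Fin n) => ∫⁻ y, κ1 (x - y) * W y) volume :=
    (Measurable.lintegral_prod_right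
      (f := fun x y : EuclideanSpace ℝ (Fin n) => κ1 (x - y) * W y) (by fun_prop)).aemeasurable
  have hG2m : AEMeasurable (fun x : EuclideanSpace ℝ (Fin n) => ∫⁻ y, κ2 (x - y) * W y) volume :=
    (Measurable.lintegral_prod_right
      (f := fun x y : EuclideanSpace ℝ (Fin n) => κ2 (x - y) * W y) (by fun_prop)).aemeasurable
  -- integral bounds
  have I1 : ∫⁻ z, κ1 z ≤ ENNReal.ofReal Ck * (c1 * ENNReal.ofReal (N ^ ((n : ℝ) + -lam))) := by
    rw [hκ1def, lintegral_indicator measurableSet_ball, hκdef,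
      lintegral_const_mul _ (measurable_nnnorm.coe_nnreal_ennreal.pow_const _)]
    exact mul_le_mul_right (hc1 N hN) _
  have IW2 : ∫⁻ z, (W z) ^ (2 : ℝ)
      ≤ (ENNReal.ofReal (K * Cζ)) ^ (2 : ℝ) *
          (c3 * ENNReal.ofReal (N ^ ((n : ℝ) + (1 - α) * 2))) := by
    have hWsq : (fun z => (W z) ^ (2 : ℝ)) = (Metric.closedBall x₀ N).indicator
        (fun y => (ENNReal.ofReal (K * Cζ)) ^ (2 : ℝ) * (‖y‖₊ : ℝ≥0∞) ^ ((1 - α) * 2)) := by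
      funext z
      by_cases hz : z ∈ Metric.closedBall x₀ N
      · rw [hWdef]
        simp only [indicator_of_mem hz]
        rw [ENNReal.mul_rpow_of_nonneg _ _ (by norm_num : (0:ℝ) ≤ 2), ← ENNReal.rpow_mul]
      · rw [hWdef]
        simp only [indicator_of_notMem hz]
        rw [ENNReal.zero_rpow_of_pos (by norm_num)]
    rw [hWsq, lintegral_indicator measurableSet_closedBall,
      lintegral_const_mul _ (measurable_nnnorm.coe_nnreal_ennreal.pow_const _)]
    exact mul_le_mul_right (hc3 N hN x₀) _
  have Ik2 : ∫⁻ z, (κ2 z) ^ (2 : ℝ)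
      ≤ (ENNReal.ofReal Ck) ^ (2 : ℝ) *
          (c2 * ENNReal.ofReal (N ^ ((n : ℝ) + -lam * 2))) := by
    have hκ2sq : (fun z => (κ2 z) ^ (2 : ℝ))
        = ((Metric.ball (0 : EuclideanSpace ℝ (Fin n)) N)ᶜ).indicator
          (fun z => (ENNReal.ofReal Ck) ^ (2 : ℝ) * (‖z‖₊ : ℝ≥0∞) ^ (-lam * 2)) := by
      funext z
      by_cases hz : z ∈ (Metric.ball (0 : EuclideanSpace ℝ (Fin n)) N)ᶜ
      · rw [hκ2def]
        simp only [indicator_of_mem hz]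
        rw [hκdef, ENNReal.mul_rpow_of_nonneg _ _ (by norm_num : (0:ℝ) ≤ 2), ← ENNReal.rpow_mul]
      · rw [hκ2def]
        simp only [indicator_of_notMem hz]
        rw [ENNReal.zero_rpow_of_pos (by norm_num)]
    rw [hκ2sq, lintegral_indicator measurableSet_ball.compl,
      lintegral_const_mul _ (measurable_nnnorm.coe_nnreal_ennreal.pow_const _)]
    exact mul_le_mul_right (hc2 N hN) _
  have IW1 : ∫⁻ z, W z
      ≤ ENNReal.ofReal (K * Cζ) * (c4 * ENNReal.ofReal (N ^ ((n : ℝ) + (1 - α)))) := by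
    rw [hWdef, lintegral_indicator measurableSet_closedBall,
      lintegral_const_mul _ (measurable_nnnorm.coe_nnreal_ennreal.pow_const _)]
    exact mul_le_mul_right (hc4 N hN x₀) _
  -- the two Young-type terms
  have hT1 : (∫⁻ z, κ1 z) * (∫⁻ z, (W z) ^ (2 : ℝ)) ^ (1/2 : ℝ)
      ≤ (ENNReal.ofReal Ck * (c1 * c3 ^ (1/2 : ℝ))) *
          (ENNReal.ofReal (K * Cζ) * ENNReal.ofReal (N ^ ((n : ℝ) / 2))) := by
    calc (∫⁻ z, κ1 z) * (∫⁻ z, (W z) ^ (2 : ℝ)) ^ (1/2 : ℝ)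
        ≤ (ENNReal.ofReal Ck * (c1 * ENNReal.ofReal (N ^ ((n : ℝ) + -lam)))) *
            ((ENNReal.ofReal (K * Cζ)) ^ (2 : ℝ) *
              (c3 * ENNReal.ofReal (N ^ ((n : ℝ) + (1 - α) * 2)))) ^ (1/2 : ℝ) := by
          exact mul_le_mul' I1 (ENNReal.rpow_le_rpow IW2 (by norm_num))
      _ = (ENNReal.ofReal Ck * (c1 * c3 ^ (1/2 : ℝ))) *
            (ENNReal.ofReal (K * Cζ) *
              (ENNReal.ofReal (N ^ ((n : ℝ) + -lam)) *
                ENNReal.ofReal (N ^ (((n : ℝ) + (1 - α) * 2) * (1/2))))) := by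
          rw [ENNReal.mul_rpow_of_nonneg _ _ (by norm_num : (0:ℝ) ≤ 1/2),
            ENNReal.mul_rpow_of_nonneg c3 _ (by norm_num : (0:ℝ) ≤ 1/2),
            ← ENNReal.rpow_mul (ENNReal.ofReal (K * Cζ)),
            ENNReal.ofReal_rpow_of_nonneg (by positivity) (by norm_num : (0:ℝ) ≤ 1/2),
            ← Real.rpow_mul hN.le]
          norm_num
          ring
      _ = (ENNReal.ofReal Ck * (c1 * c3 ^ (1/2 : ℝ))) *
            (ENNReal.ofReal (K * Cζ) * ENNReal.ofReal (N ^ ((n : ℝ) / 2))) := by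
          rw [← ENNReal.ofReal_mul (by positivity), ← Real.rpow_add hN]
          congr 3
          rw [hlam]; ring
  have hT2 : (∫⁻ z, W z) * (∫⁻ z, (κ2 z) ^ (2 : ℝ)) ^ (1/2 : ℝ)
      ≤ (ENNReal.ofReal Ck * (c2 ^ (1/2 : ℝ) * c4)) *
          (ENNReal.ofReal (K * Cζ) * ENNReal.ofReal (N ^ ((n : ℝ) / 2))) := by
    calc (∫⁻ z, W z) * (∫⁻ z, (κ2 z) ^ (2 : ℝ)) ^ (1/2 : ℝ)
        ≤ (ENNReal.ofReal (K * Cζ) * (c4 * ENNReal.ofReal (N ^ ((n : ℝ) + (1 - α))))) *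
            ((ENNReal.ofReal Ck) ^ (2 : ℝ) *
              (c2 * ENNReal.ofReal (N ^ ((n : ℝ) + -lam * 2)))) ^ (1/2 : ℝ) := by
          exact mul_le_mul' IW1 (ENNReal.rpow_le_rpow Ik2 (by norm_num))
      _ = (ENNReal.ofReal Ck * (c2 ^ (1/2 : ℝ) * c4)) *
            (ENNReal.ofReal (K * Cζ) *
              (ENNReal.ofReal (N ^ ((n : ℝ) + (1 - α))) *
                ENNReal.ofReal (N ^ (((n : ℝ) + -lam * 2) * (1/2))))) := by
          rw [ENNReal.mul_rpow_of_nonneg _ _ (by norm_num : (0:ℝ) ≤ 1/2),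
            ENNReal.mul_rpow_of_nonneg c2 _ (by norm_num : (0:ℝ) ≤ 1/2),
            ← ENNReal.rpow_mul (ENNReal.ofReal Ck),
            ENNReal.ofReal_rpow_of_nonneg (by positivity) (by norm_num : (0:ℝ) ≤ 1/2),
            ← Real.rpow_mul hN.le]
          norm_num
          ring
      _ = (ENNReal.ofReal Ck * (c2 ^ (1/2 : ℝ) * c4)) *
            (ENNReal.ofReal (K * Cζ) * ENNReal.ofReal (N ^ ((n : ℝ) / 2))) := by
          rw [← ENNReal.ofReal_mul (by positivity), ← Real.rpow_add hN]
          congr 3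
          rw [hlam]; ring
  -- main chain
  calc eLpNorm (fun x : EuclideanSpace ℝ (Fin n) => ∫ y, k (x - y) * (h y * ζ y)) 2 volume
      = (∫⁻ x, (‖∫ y, k (x - y) * (h y * ζ y)‖₊ : ℝ≥0∞) ^ (2 : ℝ)) ^ (1/2 : ℝ) := by
        rw [eLpNorm_eq_lintegral_rpow_enorm_toReal (by norm_num) (by norm_num)]
        norm_num
        rfl
    _ ≤ (∫⁻ x, ((fun x : EuclideanSpace ℝ (Fin n) => ∫⁻ y, κ1 (x - y) * W y)
          + fun x : EuclideanSpace ℝ (Fin n) => ∫⁻ y, κ2 (x - y) * W y) x ^ (2 : ℝ)) ^ (1/2 : ℝ) := by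
        refine ENNReal.rpow_le_rpow (lintegral_mono fun x => ?_) (by norm_num)
        refine ENNReal.rpow_le_rpow ?_ (by norm_num)
        calc (‖∫ y, k (x - y) * (h y * ζ y)‖₊ : ℝ≥0∞) ≤ ∫⁻ y, κ (x - y) * W y := hpoint x
          _ = _ := by rw [hsplit x]; rfl
    _ ≤ (∫⁻ x, (∫⁻ y, κ1 (x - y) * W y) ^ (2 : ℝ)) ^ (1/2 : ℝ)
          + (∫⁻ x, (∫⁻ y, κ2 (x - y) * W y) ^ (2 : ℝ)) ^ (1/2 : ℝ) :=
        ENNReal.lintegral_Lp_add_le hG1m hG2m one_le_two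
    _ ≤ ((∫⁻ z, κ1 z) ^ (2 : ℝ) * ∫⁻ z, (W z) ^ (2 : ℝ)) ^ (1/2 : ℝ)
          + ((∫⁻ z, W z) ^ (2 : ℝ) * ∫⁻ z, (κ2 z) ^ (2 : ℝ)) ^ (1/2 : ℝ) := by
        refine add_le_add (ENNReal.rpow_le_rpow (young_one κ1 W hκ1m hWm) (by norm_num)) ?_
        refine ENNReal.rpow_le_rpow ?_ (by norm_num)
        calc ∫⁻ x, (∫⁻ y, κ2 (x - y) * W y) ^ (2 : ℝ)
            = ∫⁻ x, (∫⁻ y, W (x - y) * κ2 y) ^ (2 : ℝ) := by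
              refine lintegral_congr fun x => ?_
              rw [conv_comm κ2 W hκ2m hWm x]
          _ ≤ _ := young_one W κ2 hWm hκ2m
    _ = (∫⁻ z, κ1 z) * (∫⁻ z, (W z) ^ (2 : ℝ)) ^ (1/2 : ℝ)
          + (∫⁻ z, W z) * (∫⁻ z, (κ2 z) ^ (2 : ℝ)) ^ (1/2 : ℝ) := by
        rw [ENNReal.mul_rpow_of_nonneg _ _ (by norm_num : (0:ℝ) ≤ 1/2),
          ENNReal.mul_rpow_of_nonneg _ _ (by norm_num : (0:ℝ) ≤ 1/2),
          ← ENNReal.rpow_mul, ← ENNReal.rpow_mul]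
        norm_num
    _ ≤ (ENNReal.ofReal Ck * (c1 * c3 ^ (1/2 : ℝ))) *
            (ENNReal.ofReal (K * Cζ) * ENNReal.ofReal (N ^ ((n : ℝ) / 2)))
          + (ENNReal.ofReal Ck * (c2 ^ (1/2 : ℝ) * c4)) *
            (ENNReal.ofReal (K * Cζ) * ENNReal.ofReal (N ^ ((n : ℝ) / 2))) :=
        add_le_add hT1 hT2
    _ = Ctot * (ENNReal.ofReal (K * Cζ) * ENNReal.ofReal (N ^ ((n : ℝ) / 2))) := by
        rw [hCtotdef]; ring
    _ ≤ ENNReal.ofReal (Ctot.toReal + 1) *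
          (ENNReal.ofReal (K * Cζ) * ENNReal.ofReal (N ^ ((n : ℝ) / 2))) := by
        refine mul_le_mul_left ?_ _
        calc Ctot = ENNReal.ofReal Ctot.toReal := (ENNReal.ofReal_toReal hCtotTop).symm
          _ ≤ _ := ENNReal.ofReal_le_ofReal (by linarith)
    _ = ENNReal.ofReal ((Ctot.toReal + 1) * K * Cζ * N ^ ((n : ℝ) / 2)) := by
        rw [← ENNReal.ofReal_mul (by positivity), ← ENNReal.ofReal_mul (by positivity)]
        congr 1
        ring
end

section
/- Suppose m : [0,T) → [0,∞) is continuously differentiable, m(t) > 0 implies m'(t) ≤ F(t)√(m(t)) for a continuous nonnegative function F. Then √(m(t)) ≤ √(m(0)) + (1/2)∫₀^t F(t') dt' for all t ∈ [0,T). -/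
open MeasureTheory intervalIntegral

/-- Gronwall-type ODE lemma: if `m : [0,T) → [0,∞)` is `C¹` and
`m(t) > 0 → m'(t) ≤ F(t)√(m(t))` for a continuous nonnegative `F`, then
`√(m(t)) ≤ √(m(0)) + (1/2)∫₀ᵗ F` on `[0,T)`. -/
theorem sqrt_gronwall (T : ℝ) (hT : 0 < T) (m m' F : ℝ → ℝ)
    (hm0 : ∀ t ∈ Set.Ico (0 : ℝ) T, 0 ≤ m t)
    (hderiv : ∀ t ∈ Set.Ico (0 : ℝ) T, HasDerivAt m (m' t) t)
    (hm'cont : ContinuousOn m' (Set.Ico (0 : ℝ) T))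
    (hFcont : Continuous F) (hF0 : ∀ t, 0 ≤ F t)
    (hineq : ∀ t ∈ Set.Ico (0 : ℝ) T, 0 < m t → m' t ≤ F t * Real.sqrt (m t)) :
    ∀ t ∈ Set.Ico (0 : ℝ) T,
      Real.sqrt (m t) ≤ Real.sqrt (m 0) + (1 / 2) * ∫ s in (0:ℝ)..t, F s := by
  intro t ht
  obtain ⟨ht0, htT⟩ := ht
  have key : ∀ ε > (0:ℝ),
      Real.sqrt (m t) ≤ Real.sqrt (m 0 + ε) + (1 / 2) * ∫ s in (0:ℝ)..t, F s := by
    intro ε hε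
    set h : ℝ → ℝ := fun s =>
      Real.sqrt (m 0 + ε) + (1 / 2) * (∫ x in (0:ℝ)..s, F x) - Real.sqrt (m s + ε) with hh
    have hsub : Set.Icc (0:ℝ) t ⊆ Set.Ico (0:ℝ) T :=
      fun x hx => ⟨hx.1, lt_of_le_of_lt hx.2 htT⟩
    -- derivative of h
    have hhd : ∀ x ∈ Set.Ico (0:ℝ) T,
        HasDerivAt h (1 / 2 * F x - m' x / (2 * Real.sqrt (m x + ε))) x := by
      intro x hx
      have h1 : HasDerivAt (fun s => ∫ u in (0:ℝ)..s, F u) (F x) x :=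
        (hFcont.integral_hasStrictDerivAt 0 x).hasDerivAt
      have hpos : 0 < m x + ε := by linarith [hm0 x hx]
      have h2 : HasDerivAt (fun s => Real.sqrt (m s + ε)) (m' x / (2 * Real.sqrt (m x + ε))) x :=
        ((hderiv x hx).add_const ε).sqrt (ne_of_gt hpos)
      have := ((h1.const_mul (1/2)).const_add (Real.sqrt (m 0 + ε))).sub h2
      exact this
    -- derivative bound on the interior
    have hnn : ∀ x ∈ Set.Ioo (0:ℝ) t,
        0 ≤ 1 / 2 * F x - m' x / (2 * Real.sqrt (m x + ε)) := by
      intro x hx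
      have hxI : x ∈ Set.Ico (0:ℝ) T := ⟨hx.1.le, lt_trans hx.2 htT⟩
      have hmx : 0 ≤ m x := hm0 x hxI
      have hs : 0 < Real.sqrt (m x + ε) := Real.sqrt_pos.mpr (by linarith)
      rcases lt_or_eq_of_le hmx with hpos | hzero
      · have h1 : m' x ≤ F x * Real.sqrt (m x + ε) := by
          refine le_trans (hineq x hxI hpos) ?_
          exact mul_le_mul_of_nonneg_left
            (Real.sqrt_le_sqrt (by linarith)) (hF0 x)
        rw [sub_nonneg, div_le_iff₀ (by positivity)]
        nlinarith
      · have hloc : IsLocalMin m x := by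
          have hmem : Set.Ioo (0:ℝ) T ∈ nhds x :=
            isOpen_Ioo.mem_nhds ⟨hx.1, lt_trans hx.2 htT⟩
          refine Filter.eventually_of_mem hmem fun u hu => ?_
          rw [← hzero]
          exact hm0 u ⟨hu.1.le, hu.2⟩
        have hm'0 : m' x = 0 := hloc.hasDerivAt_eq_zero (hderiv x hxI)
        rw [hm'0]
        simp [hF0 x]
    -- monotonicity
    have hmono : MonotoneOn h (Set.Icc 0 t) := by
      apply monotoneOn_of_deriv_nonneg (convex_Icc 0 t)
      · exact fun x hx => (hhd x (hsub hx)).continuousAt.continuousWithinAt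
      · intro x hx
        rw [interior_Icc] at hx
        exact (hhd x (hsub (Set.Ioo_subset_Icc_self hx))).differentiableAt.differentiableWithinAt
      · intro x hx
        rw [interior_Icc] at hx
        rw [(hhd x (hsub (Set.Ioo_subset_Icc_self hx))).deriv]
        exact hnn x hx
    have h0t : h 0 ≤ h t :=
      hmono ⟨le_refl 0, ht0⟩ ⟨ht0, le_refl t⟩ ht0
    have h0 : h 0 = 0 := by simp [hh]
    rw [h0] at h0t
    have := sub_nonneg.mp h0t
    calc Real.sqrt (m t) ≤ Real.sqrt (m t + ε) := Real.sqrt_le_sqrt (by linarith)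
      _ ≤ Real.sqrt (m 0 + ε) + 1 / 2 * ∫ x in (0:ℝ)..t, F x := this
  -- limit ε → 0⁺
  have tend : Filter.Tendsto
      (fun ε => Real.sqrt (m 0 + ε) + (1 / 2) * ∫ s in (0:ℝ)..t, F s)
      (nhdsWithin 0 (Set.Ioi 0))
      (nhds (Real.sqrt (m 0) + (1 / 2) * ∫ s in (0:ℝ)..t, F s)) := by
    have : Filter.Tendsto (fun ε : ℝ => Real.sqrt (m 0 + ε)) (nhds 0) (nhds (Real.sqrt (m 0))) := by
      have hc : Continuous fun ε : ℝ => Real.sqrt (m 0 + ε) :=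
        Real.continuous_sqrt.comp (continuous_const.add continuous_id)
      simpa using hc.tendsto 0
    exact ((this.mono_left nhdsWithin_le_nhds).add tendsto_const_nhds)
  exact ge_of_tendsto tend (Filter.eventually_of_mem self_mem_nhdsWithin fun ε hε => key ε hε)
end
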